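/- arXiv:1801.08691 — 4 statements merged into one kernel-verified Lean document; each statement's English description precedes it below -/
import Mathlib

section
/- Let V be a symmetric positive definite N×N real matrix, h ∈ Γ₀(ℝ^N) and h* its Fenchel conjugate. Then for every x ∈ ℝ^N and every ρ with 0 < ρ < +∞, prox^V_{ρ h*}(x) + ρ V^{-1}( prox^{V^{-1}}_{h/ρ}( V x / ρ ) ) = x. In particular, for ρ = 1, prox^V_h(x) = x − V^{-1}( prox^{V^{-1}}_{h*}( V x ) ). -/
open Matrix

noncomputable section

/-- Euclidean norm `‖x‖ = √⟨x,x⟩` on `ℝ^N` (inner product `⟨x,y⟩ = ∑ i, x i * y i`). -/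
def euNorm {N : ℕ} (x : Fin N → ℝ) : ℝ := Real.sqrt (x ⬝ᵥ x)

/-- `p` is the proximal point of `h` at `x` in the metric induced by `V`, i.e. `p`
minimizes `z ↦ h z + (1/2)‖x - z‖²_V` (with `‖w‖²_V = ⟨w, V w⟩`). -/
def IsProxPt {N : ℕ} (V : Matrix (Fin N) (Fin N) ℝ) (h : (Fin N → ℝ) → EReal)
    (x p : Fin N → ℝ) : Prop :=
  ∀ z : Fin N → ℝ,
    h p + ((1 / 2 * ((x - p) ⬝ᵥ (V *ᵥ (x - p))) : ℝ) : EReal) ≤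
      h z + ((1 / 2 * ((x - z) ⬝ᵥ (V *ᵥ (x - z))) : ℝ) : EReal)

/-- `h` belongs to `Γ₀(ℝ^N)`: proper, never `-∞`, lower semicontinuous and convex. -/
def Gamma0 {N : ℕ} (h : (Fin N → ℝ) → EReal) : Prop :=
  (∃ z, h z ≠ ⊤) ∧ (∀ z, h z ≠ ⊥) ∧ LowerSemicontinuous h ∧
    ∀ x y : Fin N → ℝ, ∀ t : ℝ, 0 ≤ t → t ≤ 1 →
      h (t • x + (1 - t) • y) ≤ (t : EReal) * h x + ((1 - t : ℝ) : EReal) * h y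

/-- Fenchel conjugate `h*(v) = sup_x ⟨v,x⟩ - h(x)`. -/
def fconj {N : ℕ} (h : (Fin N → ℝ) → EReal) (v : Fin N → ℝ) : EReal :=
  ⨆ x : Fin N → ℝ, ((v ⬝ᵥ x : ℝ) : EReal) - h x

namespace MoreauAux

variable {N : ℕ}

lemma symm_swap {W : Matrix (Fin N) (Fin N) ℝ} (hW : W.IsHermitian) (a d : Fin N → ℝ) :
    d ⬝ᵥ (W *ᵥ a) = a ⬝ᵥ (W *ᵥ d) := by
  rw [Matrix.dotProduct_mulVec, ← Matrix.mulVec_transpose]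
  rw [show Wᵀ = W by simpa [Matrix.IsHermitian, Matrix.conjTranspose_eq_transpose_of_trivial] using hW,
    dotProduct_comm]

lemma inv_mulVec_mulVec {V : Matrix (Fin N) (Fin N) ℝ} (hV : V.PosDef) (x : Fin N → ℝ) :
    V⁻¹ *ᵥ (V *ᵥ x) = x := by
  rw [Matrix.mulVec_mulVec,
    Matrix.nonsing_inv_mul _ (Matrix.isUnit_iff_isUnit_det _ |>.1 hV.isUnit), Matrix.one_mulVec]

lemma posdef_eq_zero {V : Matrix (Fin N) (Fin N) ℝ} (hV : V.PosDef) {d : Fin N → ℝ}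
    (h : d ⬝ᵥ (V *ᵥ d) ≤ 0) : d = 0 := by
  by_contra hd
  have := hV.dotProduct_mulVec_pos hd
  simp only [star_trivial] at this
  exact absurd h (not_le.mpr this)

lemma ereal_mul_le {ρ : ℝ} (hρ : 0 < ρ) {X : EReal} {r : ℝ} (h : X ≤ (r : EReal)) :
    (ρ : EReal) * X ≤ ((ρ * r : ℝ) : EReal) := by
  induction X using EReal.rec with
  | bot => rw [EReal.coe_mul_bot_of_pos hρ]; exact bot_le
  | coe s =>
      rw [← EReal.coe_mul]
      exact_mod_cast mul_le_mul_of_nonneg_left (by exact_mod_cast h) hρ.le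
  | top => exact absurd h (by simp)

lemma ereal_mul_ne_bot {ρ : ℝ} (hρ : 0 < ρ) {X : EReal} (hX : X ≠ ⊥) :
    (ρ : EReal) * X ≠ ⊥ := by
  induction X using EReal.rec with
  | bot => simp at hX
  | coe r => rw [← EReal.coe_mul]; exact EReal.coe_ne_bot _
  | top => rw [EReal.coe_mul_top_of_pos hρ]; simp

lemma ereal_mul_ne_top {ρ : ℝ} (hρ : 0 < ρ) {X : EReal} (hX : X ≠ ⊤) :
    (ρ : EReal) * X ≠ ⊤ := by
  induction X using EReal.rec with
  | bot => rw [EReal.coe_mul_bot_of_pos hρ]; simp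
  | coe r => rw [← EReal.coe_mul]; exact EReal.coe_ne_top _
  | top => simp at hX

lemma ereal_mul_eq_coe {ρ : ℝ} {X : EReal} (hXt : X ≠ ⊤) (hXb : X ≠ ⊥) :
    (ρ : EReal) * X = ((ρ * X.toReal : ℝ) : EReal) := by
  rw [← EReal.coe_toReal hXt hXb, ← EReal.coe_mul, EReal.toReal_coe]

/-- The prox point has finite value provided `f` is somewhere `≤` a real. -/
lemma prox_ne_top {W : Matrix (Fin N) (Fin N) ℝ} {f : (Fin N → ℝ) → EReal}
    {c p : Fin N → ℝ} (hprox : IsProxPt W f c p) {z : Fin N → ℝ} {r : ℝ}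
    (hz : f z ≤ (r : EReal)) : f p ≠ ⊤ := by
  intro htop
  have h1 := hprox z
  rw [htop, EReal.top_add_coe] at h1
  have h2 : f z + ((1 / 2 * ((c - z) ⬝ᵥ (W *ᵥ (c - z))) : ℝ) : EReal)
      ≤ ((r + 1 / 2 * ((c - z) ⬝ᵥ (W *ᵥ (c - z))) : ℝ) : EReal) := by
    rw [EReal.coe_add]; exact add_le_add_left hz _
  exact EReal.coe_ne_top _ (top_le_iff.1 (h1.trans h2))

/-- Variational inequality from being a prox point. -/
lemma vi {W : Matrix (Fin N) (Fin N) ℝ} (hW : W.PosDef)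
    {f : (Fin N → ℝ) → EReal} {c p : Fin N → ℝ}
    (hprox : IsProxPt W f c p) (hpt : f p ≠ ⊤) (hpb : f p ≠ ⊥) (hbot : ∀ z, f z ≠ ⊥)
    (hconv : ∀ z : Fin N → ℝ, ∀ t : ℝ, 0 ≤ t → t ≤ 1 → f z ≠ ⊤ →
      f (t • z + (1 - t) • p) ≤ ((t * (f z).toReal + (1 - t) * (f p).toReal : ℝ) : EReal)) :
    ∀ z, (((f p).toReal + (c - p) ⬝ᵥ (W *ᵥ (z - p)) : ℝ) : EReal) ≤ f z := by
  intro z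
  by_cases hz : f z = ⊤
  · rw [hz]; exact le_top
  set A := (f p).toReal with hA
  set B := (f z).toReal with hB
  set a := c - p with ha
  set d := z - p with hd
  have hfp : f p = (A : EReal) := (EReal.coe_toReal hpt hpb).symm
  have hfz : f z = (B : EReal) := (EReal.coe_toReal hz (hbot z)).symm
  have expand : ∀ t : ℝ, (a - t • d) ⬝ᵥ (W *ᵥ (a - t • d))
      = a ⬝ᵥ (W *ᵥ a) - 2*t*(a ⬝ᵥ (W *ᵥ d)) + t^2 * (d ⬝ᵥ (W *ᵥ d)) := by
    intro t
    have hs := symm_swap hW.1 a d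
    simp only [Matrix.mulVec_sub, Matrix.mulVec_smul, sub_dotProduct, dotProduct_sub,
      smul_dotProduct, dotProduct_smul, smul_eq_mul]
    rw [hs]; ring
  have key : ∀ t : ℝ, 0 < t → t ≤ 1 →
      a ⬝ᵥ (W *ᵥ d) ≤ B - A + t/2 * (d ⬝ᵥ (W *ᵥ d)) := by
    intro t ht0 ht1
    have hvec : c - (t • z + (1 - t) • p) = a - t • d := by
      rw [ha, hd]; ext i
      simp only [Pi.sub_apply, Pi.add_apply, Pi.smul_apply, smul_eq_mul]
      ring
    have h1 := hprox (t • z + (1 - t) • p)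
    rw [hfp, hvec, ← EReal.coe_add] at h1
    have h2 := hconv z t ht0.le ht1 hz
    have h3 : f (t • z + (1 - t) • p) + ((1 / 2 * ((a - t • d) ⬝ᵥ (W *ᵥ (a - t • d))) : ℝ) : EReal)
        ≤ ((t * B + (1 - t) * A + 1 / 2 * ((a - t • d) ⬝ᵥ (W *ᵥ (a - t • d))) : ℝ) : EReal) := by
      rw [EReal.coe_add]; exact add_le_add_left h2 _
    have h4 := (EReal.coe_le_coe_iff).1 (h1.trans h3)
    rw [expand t] at h4
    have h5 : t * (a ⬝ᵥ (W *ᵥ d)) ≤ t * (B - A + t/2 * (d ⬝ᵥ (W *ᵥ d))) := by nlinarith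
    exact (mul_le_mul_iff_right₀ ht0).1 h5
  have hQd : 0 ≤ d ⬝ᵥ (W *ᵥ d) := by
    have := hW.posSemidef.dotProduct_mulVec_nonneg d; simpa using this
  have main : a ⬝ᵥ (W *ᵥ d) ≤ B - A := by
    by_contra hlt
    push_neg at hlt
    set Q := d ⬝ᵥ (W *ᵥ d) with hQ
    set ε := a ⬝ᵥ (W *ᵥ d) - (B - A) with hε
    have hε0 : 0 < ε := by rw [hε]; linarith
    set t := min 1 (ε / (Q + 1)) with htdef
    have ht0 : 0 < t := lt_min one_pos (div_pos hε0 (by linarith))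
    have ht1 : t ≤ 1 := min_le_left _ _
    have htQ : t * (Q + 1) ≤ ε := by
      have := min_le_right 1 (ε / (Q + 1))
      calc t * (Q+1) ≤ (ε / (Q+1)) * (Q+1) := by nlinarith
        _ = ε := by field_simp
    have := key t ht0 ht1
    nlinarith
  rw [hfz, EReal.coe_le_coe_iff]
  linarith

variable {h : (Fin N → ℝ) → EReal}

lemma le_fconj (v : Fin N → ℝ) {x : Fin N → ℝ} (hxt : h x ≠ ⊤) (hxb : h x ≠ ⊥) :
    ((v ⬝ᵥ x - (h x).toReal : ℝ) : EReal) ≤ fconj h v := by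
  have h1 := le_iSup (fun x => ((v ⬝ᵥ x : ℝ) : EReal) - h x) x
  rw [show h x = (((h x).toReal : ℝ) : EReal) from (EReal.coe_toReal hxt hxb).symm,
    ← EReal.coe_sub] at h1
  exact h1

lemma fconj_le_of_subgrad {q g : Fin N → ℝ} (hbot : ∀ z, h z ≠ ⊥) (hq : h q ≠ ⊤)
    (hsub : ∀ z, (((h q).toReal + g ⬝ᵥ (z - q) : ℝ) : EReal) ≤ h z) :
    fconj h g ≤ ((g ⬝ᵥ q - (h q).toReal : ℝ) : EReal) := by
  refine iSup_le fun x => ?_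
  by_cases hx : h x = ⊤
  · rw [hx]
    rw [show ((g ⬝ᵥ x : ℝ) : EReal) - ⊤ = ⊥ by simp]
    exact bot_le
  · have hs := hsub x
    rw [show h x = (((h x).toReal : ℝ) : EReal) from (EReal.coe_toReal hx (hbot x)).symm,
      ← EReal.coe_sub, EReal.coe_le_coe_iff]
    have hs' : (h q).toReal + g ⬝ᵥ (x - q) ≤ (h x).toReal := by
      have := hs
      rw [show h x = (((h x).toReal : ℝ) : EReal) from (EReal.coe_toReal hx (hbot x)).symm,
        EReal.coe_le_coe_iff] at this
      exact this
    have hd : g ⬝ᵥ (x - q) = g ⬝ᵥ x - g ⬝ᵥ q := by rw [dotProduct_sub]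
    linarith [hs', hd ▸ hs']

lemma fconj_ne_bot {z₀ : Fin N → ℝ} (hz₀t : h z₀ ≠ ⊤) (hz₀b : h z₀ ≠ ⊥) (v : Fin N → ℝ) :
    fconj h v ≠ ⊥ := by
  intro hb
  have := le_fconj v hz₀t hz₀b (h := h)
  rw [hb, le_bot_iff] at this
  exact EReal.coe_ne_bot _ this

lemma fconj_conv {z₀ : Fin N → ℝ} (hz₀t : h z₀ ≠ ⊤) (hz₀b : h z₀ ≠ ⊥)
    (hbot : ∀ z, h z ≠ ⊥) {v₁ v₂ : Fin N → ℝ}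
    (h₁ : fconj h v₁ ≠ ⊤) (h₂ : fconj h v₂ ≠ ⊤) (t : ℝ) (ht0 : 0 ≤ t) (ht1 : t ≤ 1) :
    fconj h (t • v₁ + (1 - t) • v₂)
      ≤ ((t * (fconj h v₁).toReal + (1 - t) * (fconj h v₂).toReal : ℝ) : EReal) := by
  refine iSup_le fun x => ?_
  by_cases hx : h x = ⊤
  · rw [hx, show (((t • v₁ + (1 - t) • v₂) ⬝ᵥ x : ℝ) : EReal) - ⊤ = ⊥ by simp]
    exact bot_le
  · set r := (h x).toReal with hr
    have hxr : h x = ((r : ℝ) : EReal) := (EReal.coe_toReal hx (hbot x)).symm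
    set F₁ := (fconj h v₁).toReal with hF₁
    set F₂ := (fconj h v₂).toReal with hF₂
    have e₁ : v₁ ⬝ᵥ x - r ≤ F₁ := by
      have := le_fconj (h := h) v₁ hx (hbot x)
      rw [show fconj h v₁ = ((F₁ : ℝ) : EReal) from
        (EReal.coe_toReal h₁ (fconj_ne_bot hz₀t hz₀b v₁)).symm, EReal.coe_le_coe_iff] at this
      exact this
    have e₂ : v₂ ⬝ᵥ x - r ≤ F₂ := by
      have := le_fconj (h := h) v₂ hx (hbot x)
      rw [show fconj h v₂ = ((F₂ : ℝ) : EReal) from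
        (EReal.coe_toReal h₂ (fconj_ne_bot hz₀t hz₀b v₂)).symm, EReal.coe_le_coe_iff] at this
      exact this
    rw [hxr, ← EReal.coe_sub, EReal.coe_le_coe_iff]
    have hdot : (t • v₁ + (1 - t) • v₂) ⬝ᵥ x = t * (v₁ ⬝ᵥ x) + (1 - t) * (v₂ ⬝ᵥ x) := by
      rw [add_dotProduct, smul_dotProduct, smul_dotProduct, smul_eq_mul, smul_eq_mul]
    rw [hdot]
    nlinarith

lemma ereal_mul_le' {ρ : ℝ} (hρ : 0 ≤ ρ) {X : EReal} {r : ℝ} (h : X ≤ (r : EReal)) :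
    (ρ : EReal) * X ≤ ((ρ * r : ℝ) : EReal) := by
  rcases hρ.eq_or_lt with h0 | h0
  · rw [← h0]
    simp only [EReal.coe_zero, EReal.zero_mul, zero_mul]
    exact le_refl _
  · exact ereal_mul_le h0 h

lemma exists_minorant (hh : Gamma0 h) :
    ∃ (y : Fin N → ℝ) (c : ℝ), ∀ z : Fin N → ℝ, ((y ⬝ᵥ z + c : ℝ) : EReal) ≤ h z := by
  obtain ⟨⟨z₀, hz₀t⟩, hbot, lsc, conv⟩ := hh
  set S : Set ((Fin N → ℝ) × ℝ) := {w | h w.1 ≤ ((w.2 : ℝ) : EReal)} with hS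
  have hSconv : Convex ℝ S := by
    intro w₁ h₁ w₂ h₂ a b ha hb hab
    simp only [hS, Set.mem_setOf_eq] at h₁ h₂ ⊢
    have hb' : b = 1 - a := by linarith
    subst hb'
    have ha1 : a ≤ 1 := by linarith
    have hc := conv w₁.1 w₂.1 a ha ha1
    simp only [Prod.fst_add, Prod.smul_fst, Prod.snd_add, Prod.smul_snd, smul_eq_mul]
    refine hc.trans ?_
    have m₁ := ereal_mul_le' ha h₁
    have m₂ := ereal_mul_le' (by linarith : (0:ℝ) ≤ 1 - a) h₂
    calc (a : EReal) * h w₁.1 + ((1 - a : ℝ) : EReal) * h w₂.1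
        ≤ ((a * w₁.2 : ℝ) : EReal) + (((1 - a) * w₂.2 : ℝ) : EReal) := add_le_add m₁ m₂
      _ = ((a * w₁.2 + (1 - a) * w₂.2 : ℝ) : EReal) := by rw [← EReal.coe_add]
  have hSclosed : IsClosed S := by
    rw [← isOpen_compl_iff, isOpen_iff_mem_nhds]
    rintro ⟨zw, tw⟩ hw
    simp only [Set.mem_compl_iff, hS, Set.mem_setOf_eq, not_le] at hw
    obtain ⟨r, hr1, hr2⟩ : ∃ r : ℝ, tw < r ∧ ((r : ℝ) : EReal) < h zw := by
      by_cases ht : h zw = ⊤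
      · exact ⟨tw + 1, by linarith, by rw [ht]; exact EReal.coe_lt_top _⟩
      · set T := (h zw).toReal with hT
        have hzr : h zw = ((T : ℝ) : EReal) := (EReal.coe_toReal ht (hbot zw)).symm
        have htw : tw < T := by
          rw [hzr, EReal.coe_lt_coe_iff] at hw; exact hw
        refine ⟨(tw + T) / 2, by linarith, ?_⟩
        rw [hzr, EReal.coe_lt_coe_iff]; linarith
    have h1 : ∀ᶠ x' in nhds zw, ((r : ℝ) : EReal) < h x' := lsc zw _ hr2
    have h2 : ∀ᶠ t in nhds tw, t < r := gt_mem_nhds hr1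
    have h3 := h1.prod_mk h2
    rw [← nhds_prod_eq] at h3
    refine Filter.mem_of_superset h3 ?_
    rintro ⟨z1, t1⟩ ⟨hz1, ht1⟩
    simp only [Set.mem_compl_iff, hS, Set.mem_setOf_eq, not_le]
    exact lt_trans (by exact_mod_cast ht1) hz1
  set T₀ := (h z₀).toReal with hT₀
  have hz₀r : h z₀ = ((T₀ : ℝ) : EReal) := (EReal.coe_toReal hz₀t (hbot z₀)).symm
  have hx₀ : ((z₀, T₀ - 1) : (Fin N → ℝ) × ℝ) ∉ S := by
    simp only [hS, Set.mem_setOf_eq, not_le, hz₀r]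
    rw [EReal.coe_lt_coe_iff]; linarith
  obtain ⟨f, u, hfx, hfS⟩ := geometric_hahn_banach_point_closed hSconv hSclosed hx₀
  set s := f ((0 : Fin N → ℝ), (1 : ℝ)) with hsdef
  set φ : (Fin N → ℝ) → ℝ := fun z => f (z, (0 : ℝ)) with hφ
  have hf : ∀ (z : Fin N → ℝ) (t : ℝ), f (z, t) = φ z + t * s := by
    intro z t
    have he : ((z, t) : (Fin N → ℝ) × ℝ) = (z, (0:ℝ)) + t • ((0 : Fin N → ℝ), (1:ℝ)) := by
      simp [Prod.ext_iff]
    rw [he, map_add, f.map_smul, smul_eq_mul]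
  have hmem : ((z₀, T₀) : (Fin N → ℝ) × ℝ) ∈ S := by
    simp only [hS, Set.mem_setOf_eq, hz₀r]; exact le_refl _
  have hs_pos : 0 < s := by
    have h1 := hfS _ hmem
    rw [hf] at h1 hfx
    nlinarith
  have hmin : ∀ z, (((u - φ z) / s : ℝ) : EReal) ≤ h z := by
    intro z
    by_cases hzt : h z = ⊤
    · rw [hzt]; exact le_top
    · set T := (h z).toReal with hT
      have hzr : h z = ((T : ℝ) : EReal) := (EReal.coe_toReal hzt (hbot z)).symm
      have hmem' : ((z, T) : (Fin N → ℝ) × ℝ) ∈ S := by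
        simp only [hS, Set.mem_setOf_eq, hzr]; exact le_refl _
      have h1 := hfS _ hmem'
      rw [hf] at h1
      rw [hzr, EReal.coe_le_coe_iff, div_le_iff₀ hs_pos]
      linarith
  have hrep : ∃ y : Fin N → ℝ, ∀ z, φ z = y ⬝ᵥ z := by
    refine ⟨fun i => φ (Pi.single i 1), fun z => ?_⟩
    have he : ((z, (0:ℝ)) : (Fin N → ℝ) × ℝ)
        = ∑ i, (z i) • (((Pi.single i 1 : Fin N → ℝ), (0:ℝ)) : (Fin N → ℝ) × ℝ) := by
      rw [Prod.ext_iff]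
      constructor
      · rw [Prod.fst_sum]
        funext j
        simp only [Prod.smul_fst, Finset.sum_apply, Pi.smul_apply, smul_eq_mul,
          Pi.single_apply, mul_ite, mul_one, mul_zero]
        rw [Finset.sum_ite_eq Finset.univ j z]
        simp
      · rw [Prod.snd_sum]
        simp
    have : φ z = f (z, (0:ℝ)) := rfl
    rw [this, he, map_sum]
    simp only [f.map_smul, smul_eq_mul]
    simp [dotProduct, hφ, mul_comm]
  obtain ⟨y, hy⟩ := hrep
  refine ⟨(-(1 / s)) • y, u / s, fun z => ?_⟩
  have heq : ((-(1 / s)) • y) ⬝ᵥ z + u / s = (u - φ z) / s := by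
    rw [smul_dotProduct, smul_eq_mul, hy z]
    field_simp
    ring
  rw [heq]
  exact hmin z

lemma exists_fconj_le (hh : Gamma0 h) : ∃ (y : Fin N → ℝ) (c : ℝ), fconj h y ≤ (c : EReal) := by
  obtain ⟨y, c, hmin⟩ := exists_minorant hh
  refine ⟨y, -c, iSup_le fun x => ?_⟩
  by_cases hx : h x = ⊤
  · rw [hx, show ((y ⬝ᵥ x : ℝ) : EReal) - ⊤ = ⊥ by simp]
    exact bot_le
  · have hxr : h x = (((h x).toReal : ℝ) : EReal) := (EReal.coe_toReal hx (hh.2.1 x)).symm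
    have := hmin x
    rw [hxr, EReal.coe_le_coe_iff] at this
    rw [hxr, ← EReal.coe_sub, EReal.coe_le_coe_iff]
    linarith

end MoreauAux

open MoreauAux

/-- (Moreau identity in `H_V`.) For `V` SPD, `h ∈ Γ₀(ℝ^N)` and `ρ > 0`:
`prox^V_{ρh*}(x) + ρ V⁻¹ (prox^{V⁻¹}_{h/ρ}(Vx/ρ)) = x`; in particular for `ρ = 1`,
`prox^V_h(x) = x - V⁻¹ (prox^{V⁻¹}_{h*}(Vx))`. -/
theorem stmt_1 {N : ℕ} (V : Matrix (Fin N) (Fin N) ℝ) (hV : V.PosDef)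
    (h : (Fin N → ℝ) → EReal) (hh : Gamma0 h) :
    (∀ ρ : ℝ, 0 < ρ → ∀ x p q : Fin N → ℝ,
        IsProxPt V (fun z => ((ρ : ℝ) : EReal) * fconj h z) x p →
        IsProxPt V⁻¹ (fun z => ((1 / ρ : ℝ) : EReal) * h z) (ρ⁻¹ • (V *ᵥ x)) q →
        p + ρ • (V⁻¹ *ᵥ q) = x) ∧
    (∀ x p q : Fin N → ℝ,
        IsProxPt V h x p →
        IsProxPt V⁻¹ (fconj h) (V *ᵥ x) q →
        p = x - V⁻¹ *ᵥ q) := by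
  obtain ⟨y, cy, hfy⟩ := exists_fconj_le hh
  obtain ⟨⟨z₀, hz₀t⟩, hbot, lsc, conv⟩ := hh
  have hz₀b := hbot z₀
  set T₀ := (h z₀).toReal with hT₀
  have hz₀r : h z₀ = ((T₀ : ℝ) : EReal) := (EReal.coe_toReal hz₀t hz₀b).symm
  have hfyb : ∀ v, fconj h v ≠ ⊥ := fconj_ne_bot hz₀t hz₀b
  have hfyt : fconj h y ≠ ⊤ := fun ht => by rw [ht] at hfy; exact absurd hfy (by simp)
  -- convexity of h in "VI form" at any base point with finite value
  have hconvh : ∀ b : Fin N → ℝ, h b ≠ ⊤ → ∀ z : Fin N → ℝ, ∀ t : ℝ, 0 ≤ t → t ≤ 1 →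
      h z ≠ ⊤ → h (t • z + (1 - t) • b)
        ≤ ((t * (h z).toReal + (1 - t) * (h b).toReal : ℝ) : EReal) := by
    intro b hb z t ht0 ht1 hz
    have hc := conv z b t ht0 ht1
    rw [ereal_mul_eq_coe hz (hbot z), ereal_mul_eq_coe hb (hbot b), ← EReal.coe_add] at hc
    exact hc
  constructor
  · -- Part 1
    intro ρ hρ x p q hp hq
    have hρ' : (0:ℝ) < 1 / ρ := by positivity
    -- the two objective functions
    set f₁ : (Fin N → ℝ) → EReal := fun z => ((ρ : ℝ) : EReal) * fconj h z with hf₁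
    set f₂ : (Fin N → ℝ) → EReal := fun z => ((1 / ρ : ℝ) : EReal) * h z with hf₂
    -- finiteness facts
    have hf₁y : f₁ y ≤ ((ρ * cy : ℝ) : EReal) := ereal_mul_le hρ hfy
    have hf₁pt : f₁ p ≠ ⊤ := prox_ne_top hp hf₁y
    have hcpt : fconj h p ≠ ⊤ := by
      intro ht
      apply hf₁pt
      show ((ρ : ℝ) : EReal) * fconj h p = ⊤
      rw [ht, EReal.coe_mul_top_of_pos hρ]
    have hcpb : fconj h p ≠ ⊥ := hfyb p
    have hf₁b : ∀ z, f₁ z ≠ ⊥ := fun z => ereal_mul_ne_bot hρ (hfyb z)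
    have hf₂z₀ : f₂ z₀ ≤ (((1/ρ) * T₀ : ℝ) : EReal) := ereal_mul_le hρ' (le_of_eq hz₀r)
    have hf₂qt : f₂ q ≠ ⊤ := prox_ne_top hq hf₂z₀
    have hqt : h q ≠ ⊤ := by
      intro ht
      apply hf₂qt
      show ((1/ρ : ℝ) : EReal) * h q = ⊤
      rw [ht, EReal.coe_mul_top_of_pos hρ']
    have hqb : h q ≠ ⊥ := hbot q
    have hf₂b : ∀ z, f₂ z ≠ ⊥ := fun z => ereal_mul_ne_bot hρ' (hbot z)
    -- toReal values
    set A := (fconj h p).toReal with hA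
    set Hq := (h q).toReal with hHq
    have hf₁p : f₁ p = ((ρ * A : ℝ) : EReal) := ereal_mul_eq_coe hcpt hcpb
    have hf₂q : f₂ q = (((1/ρ) * Hq : ℝ) : EReal) := ereal_mul_eq_coe hqt hqb
    -- convexity in VI form for f₁
    have hconv₁ : ∀ z : Fin N → ℝ, ∀ t : ℝ, 0 ≤ t → t ≤ 1 → f₁ z ≠ ⊤ →
        f₁ (t • z + (1 - t) • p)
          ≤ ((t * (f₁ z).toReal + (1 - t) * (f₁ p).toReal : ℝ) : EReal) := by
      intro z t ht0 ht1 hzt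
      have hzt' : fconj h z ≠ ⊤ := by
        intro ht
        apply hzt
        show ((ρ : ℝ) : EReal) * fconj h z = ⊤
        rw [ht, EReal.coe_mul_top_of_pos hρ]
      have hc := fconj_conv hz₀t hz₀b hbot hzt' hcpt t ht0 ht1
      have h2 : f₁ (t • z + (1 - t) • p)
          ≤ ((ρ * (t * (fconj h z).toReal + (1 - t) * (fconj h p).toReal) : ℝ) : EReal) :=
        ereal_mul_le hρ hc
      refine h2.trans (le_of_eq ?_)
      rw [EReal.coe_eq_coe_iff]
      have e1 : (f₁ z).toReal = ρ * (fconj h z).toReal := by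
        rw [hf₁]; exact EReal.toReal_mul.trans (by rw [EReal.toReal_coe])
      have e2 : (f₁ p).toReal = ρ * (fconj h p).toReal := by
        rw [hf₁]; exact EReal.toReal_mul.trans (by rw [EReal.toReal_coe])
      rw [e1, e2]; ring
    -- convexity in VI form for f₂
    have hconv₂ : ∀ z : Fin N → ℝ, ∀ t : ℝ, 0 ≤ t → t ≤ 1 → f₂ z ≠ ⊤ →
        f₂ (t • z + (1 - t) • q)
          ≤ ((t * (f₂ z).toReal + (1 - t) * (f₂ q).toReal : ℝ) : EReal) := by
      intro z t ht0 ht1 hzt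
      have hzt' : h z ≠ ⊤ := by
        intro ht
        apply hzt
        show ((1/ρ : ℝ) : EReal) * h z = ⊤
        rw [ht, EReal.coe_mul_top_of_pos hρ']
      have hc := hconvh q hqt z t ht0 ht1 hzt'
      have h2 : f₂ (t • z + (1 - t) • q)
          ≤ (((1/ρ) * (t * (h z).toReal + (1 - t) * (h q).toReal) : ℝ) : EReal) :=
        ereal_mul_le hρ' hc
      refine h2.trans (le_of_eq ?_)
      rw [EReal.coe_eq_coe_iff]
      have e1 : (f₂ z).toReal = (1/ρ) * (h z).toReal := by
        rw [hf₂]; exact EReal.toReal_mul.trans (by rw [EReal.toReal_coe])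
      have e2 : (f₂ q).toReal = (1/ρ) * (h q).toReal := by
        rw [hf₂]; exact EReal.toReal_mul.trans (by rw [EReal.toReal_coe])
      rw [e1, e2]; ring
    -- variational inequalities
    have S1' := vi hV hp hf₁pt (hf₁b p) hf₁b hconv₁
    have S2' := vi hV.inv hq hf₂qt (hf₂b q) hf₂b hconv₂
    -- subgradient vectors
    set w : Fin N → ℝ := ρ⁻¹ • (V *ᵥ (x - p)) with hw
    set g : Fin N → ℝ := x - ρ • (V⁻¹ *ᵥ q) with hg
    -- S1 : w ∈ ∂(fconj h)(p)
    have S1 : ∀ z, ((A + w ⬝ᵥ (z - p) : ℝ) : EReal) ≤ fconj h z := by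
      intro z
      by_cases hzt : fconj h z = ⊤
      · rw [hzt]; exact le_top
      · have hfz : fconj h z = (((fconj h z).toReal : ℝ) : EReal) :=
          (EReal.coe_toReal hzt (hfyb z)).symm
        have h1 := S1' z
        have e0 : (f₁ p).toReal = ρ * A := by
          rw [hf₁p, EReal.toReal_coe]
        rw [e0] at h1
        have h2 : f₁ z = ((ρ * (fconj h z).toReal : ℝ) : EReal) := ereal_mul_eq_coe hzt (hfyb z)
        rw [h2, EReal.coe_le_coe_iff] at h1
        have hdot : w ⬝ᵥ (z - p) = ρ⁻¹ * ((x - p) ⬝ᵥ (V *ᵥ (z - p))) := by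
          rw [hw, smul_dotProduct, smul_eq_mul]
          congr 1
          rw [dotProduct_comm, symm_swap hV.1]
        rw [hfz, EReal.coe_le_coe_iff, hdot]
        have hρ0 : ρ ≠ 0 := ne_of_gt hρ
        rw [← mul_le_mul_iff_right₀ hρ]
        have : ρ * (A + ρ⁻¹ * ((x - p) ⬝ᵥ (V *ᵥ (z - p)))) = ρ * A + (x - p) ⬝ᵥ (V *ᵥ (z - p)) := by
          field_simp
        rw [this]
        linarith
    -- S2 : g ∈ ∂h(q)
    have S2 : ∀ z, ((Hq + g ⬝ᵥ (z - q) : ℝ) : EReal) ≤ h z := by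
      intro z
      by_cases hzt : h z = ⊤
      · rw [hzt]; exact le_top
      · have hfz : h z = (((h z).toReal : ℝ) : EReal) := (EReal.coe_toReal hzt (hbot z)).symm
        have h1 := S2' z
        have e0 : (f₂ q).toReal = (1/ρ) * Hq := by rw [hf₂q, EReal.toReal_coe]
        rw [e0] at h1
        have h2 : f₂ z = (((1/ρ) * (h z).toReal : ℝ) : EReal) := ereal_mul_eq_coe hzt (hbot z)
        rw [h2, EReal.coe_le_coe_iff] at h1
        set c₂ : Fin N → ℝ := ρ⁻¹ • (V *ᵥ x) with hc₂
        have hvec : ρ • (V⁻¹ *ᵥ (c₂ - q)) = g := by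
          rw [hc₂, hg, Matrix.mulVec_sub, Matrix.mulVec_smul, inv_mulVec_mulVec hV,
            smul_sub, smul_smul, mul_inv_cancel₀ (ne_of_gt hρ), one_smul]
        have hdot : g ⬝ᵥ (z - q) = ρ * ((c₂ - q) ⬝ᵥ (V⁻¹ *ᵥ (z - q))) := by
          rw [symm_swap hV.inv.1, dotProduct_comm, ← hvec, dotProduct_smul, smul_eq_mul]
        rw [hfz, EReal.coe_le_coe_iff, hdot]
        have hρ0 : ρ ≠ 0 := ne_of_gt hρ
        have h3 : ρ * ((1/ρ) * Hq + (c₂ - q) ⬝ᵥ (V⁻¹ *ᵥ (z - q)))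
            ≤ ρ * ((1/ρ) * (h z).toReal) := by
          exact mul_le_mul_of_nonneg_left h1 hρ.le
        have e4 : ρ * ((1/ρ) * Hq + (c₂ - q) ⬝ᵥ (V⁻¹ *ᵥ (z - q)))
            = Hq + ρ * ((c₂ - q) ⬝ᵥ (V⁻¹ *ᵥ (z - q))) := by field_simp
        have e5 : ρ * ((1/ρ) * (h z).toReal) = (h z).toReal := by field_simp
        rw [e4, e5] at h3
        exact h3
    -- the chain
    have hupper : fconj h g ≤ ((g ⬝ᵥ q - Hq : ℝ) : EReal) := fconj_le_of_subgrad hbot hqt S2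
    have r1 : A + w ⬝ᵥ (g - p) ≤ g ⬝ᵥ q - Hq :=
      EReal.coe_le_coe_iff.1 ((S1 g).trans hupper)
    have r2 : p ⬝ᵥ q - Hq ≤ A := by
      have h1 := le_fconj (h := h) p hqt hqb
      rw [show fconj h p = ((A : ℝ) : EReal) from (EReal.coe_toReal hcpt hcpb).symm,
        EReal.coe_le_coe_iff] at h1
      exact h1
    have hgp : g - p = ρ • (V⁻¹ *ᵥ (w - q)) := by
      rw [hg, hw, Matrix.mulVec_sub, Matrix.mulVec_smul, inv_mulVec_mulVec hV, smul_sub,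
        smul_smul, mul_inv_cancel₀ (ne_of_gt hρ), one_smul]
      module
    have r3 : (w - q) ⬝ᵥ (g - p) ≤ 0 := by
      have e1 : (w - q) ⬝ᵥ (g - p) = w ⬝ᵥ (g - p) - q ⬝ᵥ (g - p) := by rw [sub_dotProduct]
      have e2 : q ⬝ᵥ (g - p) = q ⬝ᵥ g - q ⬝ᵥ p := by rw [dotProduct_sub]
      have e3 : g ⬝ᵥ q = q ⬝ᵥ g := dotProduct_comm _ _
      have e4 : p ⬝ᵥ q = q ⬝ᵥ p := dotProduct_comm _ _
      rw [e1, e2]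
      rw [e3] at r1
      rw [e4] at r2
      linarith
    have r4 : (w - q) ⬝ᵥ (V⁻¹ *ᵥ (w - q)) ≤ 0 := by
      rw [hgp, dotProduct_smul, smul_eq_mul] at r3
      nlinarith
    have hwq : w - q = 0 := posdef_eq_zero hV.inv r4
    have hqw : q = w := by
      have := sub_eq_zero.1 hwq; exact this.symm
    rw [hqw, hw]
    rw [Matrix.mulVec_smul, inv_mulVec_mulVec hV, smul_smul, mul_inv_cancel₀ (ne_of_gt hρ),
      one_smul]
    abel
  · -- Part 2
    intro x p q hp hq
    have hpt : h p ≠ ⊤ := prox_ne_top hp (le_of_eq hz₀r)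
    have hpb : h p ≠ ⊥ := hbot p
    have hqt : fconj h q ≠ ⊤ := prox_ne_top hq hfy
    have hqb : fconj h q ≠ ⊥ := hfyb q
    set Hp := (h p).toReal with hHp
    set A' := (fconj h q).toReal with hA'
    have S1' := vi hV hp hpt hpb hbot (hconvh p hpt)
    have hconv₂ : ∀ z : Fin N → ℝ, ∀ t : ℝ, 0 ≤ t → t ≤ 1 → fconj h z ≠ ⊤ →
        fconj h (t • z + (1 - t) • q)
          ≤ ((t * (fconj h z).toReal + (1 - t) * (fconj h q).toReal : ℝ) : EReal) :=
      fun z t ht0 ht1 hzt => fconj_conv hz₀t hz₀b hbot hzt hqt t ht0 ht1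
    have S2' := vi hV.inv hq hqt hqb hfyb hconv₂
    set w' : Fin N → ℝ := V *ᵥ (x - p) with hw'
    set g' : Fin N → ℝ := x - V⁻¹ *ᵥ q with hg'
    have S1 : ∀ z, ((Hp + w' ⬝ᵥ (z - p) : ℝ) : EReal) ≤ h z := by
      intro z
      have h1 := S1' z
      have hdot : w' ⬝ᵥ (z - p) = (x - p) ⬝ᵥ (V *ᵥ (z - p)) := by
        rw [hw', dotProduct_comm, symm_swap hV.1]
      rw [hdot]
      exact h1
    have S2 : ∀ z, ((A' + g' ⬝ᵥ (z - q) : ℝ) : EReal) ≤ fconj h z := by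
      intro z
      have h1 := S2' z
      have hvec : V⁻¹ *ᵥ (V *ᵥ x - q) = g' := by
        rw [hg', Matrix.mulVec_sub, inv_mulVec_mulVec hV]
      have hdot : g' ⬝ᵥ (z - q) = (V *ᵥ x - q) ⬝ᵥ (V⁻¹ *ᵥ (z - q)) := by
        rw [symm_swap hV.inv.1, dotProduct_comm, hvec]
      rw [hdot]
      exact h1
    have hupper : fconj h w' ≤ ((w' ⬝ᵥ p - Hp : ℝ) : EReal) := fconj_le_of_subgrad hbot hpt S1
    have r1 : A' + g' ⬝ᵥ (w' - q) ≤ w' ⬝ᵥ p - Hp :=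
      EReal.coe_le_coe_iff.1 ((S2 w').trans hupper)
    have r2 : q ⬝ᵥ p - Hp ≤ A' := by
      have h1 := le_fconj (h := h) q hpt hpb
      rw [show fconj h q = ((A' : ℝ) : EReal) from (EReal.coe_toReal hqt hqb).symm,
        EReal.coe_le_coe_iff] at h1
      exact h1
    have hgp : g' - p = V⁻¹ *ᵥ (w' - q) := by
      rw [hg', hw', Matrix.mulVec_sub, inv_mulVec_mulVec hV]
      module
    have r3 : (g' - p) ⬝ᵥ (w' - q) ≤ 0 := by
      have e1 : (g' - p) ⬝ᵥ (w' - q) = g' ⬝ᵥ (w' - q) - p ⬝ᵥ (w' - q) := by rw [sub_dotProduct]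
      have e2 : p ⬝ᵥ (w' - q) = p ⬝ᵥ w' - p ⬝ᵥ q := by rw [dotProduct_sub]
      have e3 : w' ⬝ᵥ p = p ⬝ᵥ w' := dotProduct_comm _ _
      have e4 : q ⬝ᵥ p = p ⬝ᵥ q := dotProduct_comm _ _
      rw [e1, e2]
      rw [e3] at r1
      rw [e4] at r2
      linarith
    have r4 : (w' - q) ⬝ᵥ (V⁻¹ *ᵥ (w' - q)) ≤ 0 := by
      rw [hgp, dotProduct_comm] at r3
      exact r3
    have hwq : w' - q = 0 := posdef_eq_zero hV.inv r4
    have hqw : q = w' := (sub_eq_zero.1 hwq).symm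
    rw [hg', hqw, hw', inv_mulVec_mulVec hV]
    abel
end
end

section
/- Let h ∈ Γ₀(ℝ^N), let P be a symmetric positive definite N×N matrix, let u₁,…,u_r ∈ ℝ^N be linearly independent (r ≤ N), U = (u₁,…,u_r) ∈ ℝ^{N×r}, Q = U U^T, and set V = P + Q. Then for every x ∈ ℝ^N the map L : ℝ^r → ℝ^r defined by L(α) = U^T( x − prox^P_h( x − P^{-1} U α ) ) + α is Lipschitz continuous with Lipschitz constant 1 + ‖P^{-1/2} U‖², strongly monotone with modulus 1 (i.e. ⟨L(α) − L(β), α − β⟩ ≥ ‖α − β‖² for all α, β ∈ ℝ^r), has a unique zero α* ∈ ℝ^r, and prox^V_h(x) = prox^P_h( x − P^{-1} U α* ). -/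
open Matrix

noncomputable section

/-- The ℓ²→ℓ² operator norm of a matrix. -/
def matOpNorm {m n : ℕ} (A : Matrix (Fin m) (Fin n) ℝ) : ℝ :=
  ‖LinearMap.toContinuousLinearMap (Matrix.toEuclideanLin A)‖



lemma dot_mulVec_symm {n : ℕ} {P : Matrix (Fin n) (Fin n) ℝ} (hsym : Pᵀ = P)
    (a b : Fin n → ℝ) : a ⬝ᵥ (P *ᵥ b) = b ⬝ᵥ (P *ᵥ a) := by
  rw [dotProduct_mulVec, ← mulVec_transpose, hsym, dotProduct_comm]

lemma dot_mulVec_flip {n : ℕ} {P : Matrix (Fin n) (Fin n) ℝ} (hsym : Pᵀ = P)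
    (a b : Fin n → ℝ) : a ⬝ᵥ (P *ᵥ b) = (P *ᵥ a) ⬝ᵥ b := by
  rw [dotProduct_mulVec, ← mulVec_transpose, hsym]

lemma dot_transpose_mulVec {m n : ℕ} (A : Matrix (Fin m) (Fin n) ℝ)
    (a : Fin m → ℝ) (b : Fin n → ℝ) : (Aᵀ *ᵥ a) ⬝ᵥ b = a ⬝ᵥ (A *ᵥ b) := by
  rw [dotProduct_mulVec, ← mulVec_transpose]

lemma euNorm_eq {n : ℕ} (v : Fin n → ℝ) :
    euNorm v = ‖(WithLp.equiv 2 (Fin n → ℝ)).symm v‖ := by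
  rw [euNorm, EuclideanSpace.norm_eq]
  congr 1
  refine Finset.sum_congr rfl fun i _ => ?_
  simp [WithLp.equiv_symm_apply, PiLp.toLp_apply, Real.norm_eq_abs, sq_abs, dotProduct, sq]

lemma dot_eq_inner {n : ℕ} (a b : Fin n → ℝ) :
    a ⬝ᵥ b = inner ℝ ((WithLp.equiv 2 (Fin n → ℝ)).symm a)
      ((WithLp.equiv 2 (Fin n → ℝ)).symm b) := by
  rw [PiLp.inner_apply]
  simp [WithLp.equiv_symm_apply, PiLp.toLp_apply, RCLike.inner_apply, dotProduct]
  exact Finset.sum_congr rfl fun i _ => mul_comm _ _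

lemma norm_mulVec_le {m n : ℕ} (A : Matrix (Fin m) (Fin n) ℝ) (v : Fin n → ℝ) :
    ‖(WithLp.equiv 2 (Fin m → ℝ)).symm (A *ᵥ v)‖
      ≤ matOpNorm A * ‖(WithLp.equiv 2 (Fin n → ℝ)).symm v‖ := by
  have := (LinearMap.toContinuousLinearMap (Matrix.toEuclideanLin A)).le_opNorm
      ((WithLp.equiv 2 (Fin n → ℝ)).symm v)
  simpa [matOpNorm, WithLp.equiv_symm_apply, Matrix.toEuclideanLin_apply_piLp_toLp] using this

open scoped Matrix.Norms.L2Operator in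
lemma matOpNorm_transpose {m n : ℕ} (A : Matrix (Fin m) (Fin n) ℝ) :
    matOpNorm Aᵀ = matOpNorm A := by
  have h1 : matOpNorm A = ‖A‖ := rfl
  have h2 : matOpNorm Aᵀ = ‖Aᵀ‖ := rfl
  rw [h1, h2, ← Matrix.conjTranspose_eq_transpose_of_trivial,
    Matrix.l2_opNorm_conjTranspose]


lemma quad_expand {n : ℕ} {P : Matrix (Fin n) (Fin n) ℝ} (hsym : Pᵀ = P)
    (a b : Fin n → ℝ) (t : ℝ) :
    (a - t • b) ⬝ᵥ (P *ᵥ (a - t • b)) =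
      a ⬝ᵥ (P *ᵥ a) - 2 * t * (a ⬝ᵥ (P *ᵥ b)) + t ^ 2 * (b ⬝ᵥ (P *ᵥ b)) := by
  have hs := dot_mulVec_symm hsym a b
  simp only [Matrix.mulVec_sub, Matrix.mulVec_smul, dotProduct_sub, sub_dotProduct,
    dotProduct_smul, smul_dotProduct, smul_eq_mul]
  linear_combination t * hs

lemma psd_dot_nonneg {n : ℕ} {P : Matrix (Fin n) (Fin n) ℝ} (hP : P.PosSemidef)
    (a : Fin n → ℝ) : 0 ≤ a ⬝ᵥ (P *ᵥ a) := by
  simpa using hP.dotProduct_mulVec_nonneg a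

lemma prox_ne_top {N : ℕ} {h : (Fin N → ℝ) → EReal} (hprop : ∃ z, h z ≠ ⊤)
    {V : Matrix (Fin N) (Fin N) ℝ} {w p : Fin N → ℝ} (hp : IsProxPt V h w p) :
    h p ≠ ⊤ := by
  obtain ⟨z, hz⟩ := hprop
  intro htop
  have h1 := hp z
  rw [htop, EReal.top_add_coe] at h1
  have h2 : h z + ((1 / 2 * ((w - z) ⬝ᵥ (V *ᵥ (w - z))) : ℝ) : EReal) < ⊤ :=
    EReal.add_lt_top hz (EReal.coe_ne_top _)
  exact absurd (top_le_iff.1 h1) h2.ne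

lemma vi_of_isProxPt {N : ℕ} {h : (Fin N → ℝ) → EReal} (hh : Gamma0 h)
    {P : Matrix (Fin N) (Fin N) ℝ} (hP : P.PosDef) {w p : Fin N → ℝ}
    (hp : IsProxPt P h w p) (z : Fin N → ℝ) :
    h p + (((w - p) ⬝ᵥ (P *ᵥ (z - p)) : ℝ) : EReal) ≤ h z := by
  obtain ⟨hprop, hbot, _, hconv⟩ := hh
  have hPsym : Pᵀ = P := by
    have := hP.isHermitian
    rwa [Matrix.IsHermitian, Matrix.conjTranspose_eq_transpose_of_trivial] at this
  have hpt : h p ≠ ⊤ := prox_ne_top hprop hp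
  by_cases hzt : h z = ⊤
  · rw [hzt]; exact le_top
  set a := (h p).toReal with ha_def
  set b := (h z).toReal with hb_def
  have ha : h p = (a : EReal) := (EReal.coe_toReal hpt (hbot p)).symm
  have hb : h z = (b : EReal) := (EReal.coe_toReal hzt (hbot z)).symm
  rw [ha, hb, ← EReal.coe_add, EReal.coe_le_coe_iff]
  set B := (w - p) ⬝ᵥ (P *ᵥ (z - p)) with hB
  set qz := (z - p) ⬝ᵥ (P *ᵥ (z - p)) with hqz
  have hqznn : 0 ≤ qz := psd_dot_nonneg hP.posSemidef _
  have key : ∀ t : ℝ, 0 < t → t ≤ 1 → a + B ≤ b + t / 2 * qz := by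
    intro t ht ht1
    have hcz := hconv z p t ht.le ht1
    set zt := t • z + (1 - t) • p with hzt_def
    have h1 : h zt ≤ ((t * b + (1 - t) * a : ℝ) : EReal) := by
      rw [ha, hb] at hcz
      calc h zt ≤ (t : EReal) * (b : EReal) + ((1 - t : ℝ) : EReal) * (a : EReal) := hcz
        _ = ((t * b + (1 - t) * a : ℝ) : EReal) := by
            rw [← EReal.coe_mul, ← EReal.coe_mul, ← EReal.coe_add]
    have hznb : h zt ≠ ⊥ := hbot zt
    have hznt : h zt ≠ ⊤ := by
      intro hc; rw [hc] at h1; exact absurd (top_le_iff.1 h1) (EReal.coe_ne_top _)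
    set c := (h zt).toReal with hc_def
    have hc : h zt = (c : EReal) := (EReal.coe_toReal hznt hznb).symm
    have hcle : c ≤ t * b + (1 - t) * a := by
      rw [hc, EReal.coe_le_coe_iff] at h1; exact h1
    have h2 := hp zt
    rw [ha, hc, ← EReal.coe_add, ← EReal.coe_add, EReal.coe_le_coe_iff] at h2
    have hw : w - zt = (w - p) - t • (z - p) := by
      rw [hzt_def]; ext i; simp [Pi.sub_apply, Pi.smul_apply, smul_eq_mul]; ring
    have hexp : (w - zt) ⬝ᵥ (P *ᵥ (w - zt)) =
        (w - p) ⬝ᵥ (P *ᵥ (w - p)) - 2 * t * B + t ^ 2 * qz := by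
      rw [hw, hB, hqz]; exact quad_expand hPsym _ _ t
    rw [hexp] at h2
    have h3 : t * (a + B) ≤ t * (b + t / 2 * qz) := by nlinarith [h2, hcle]
    exact le_of_mul_le_mul_left h3 ht
  by_contra hcon
  push_neg at hcon
  have hq1 : 0 < qz + 1 := by linarith
  set t := min 1 ((a + B - b) / (qz + 1)) with ht_def
  have htpos : 0 < t := lt_min one_pos (div_pos (by linarith) hq1)
  have hk := key t htpos (min_le_left _ _)
  have h2 : t ≤ (a + B - b) / (qz + 1) := min_le_right _ _
  have h3 : t * (qz + 1) ≤ a + B - b := (le_div_iff₀ hq1).mp h2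
  nlinarith [hk, h3, htpos, hqznn]

lemma isProxPt_of_vi {N : ℕ} {h : (Fin N → ℝ) → EReal}
    {V : Matrix (Fin N) (Fin N) ℝ} (hVsym : Vᵀ = V) (hVpsd : V.PosSemidef)
    {w p : Fin N → ℝ}
    (vi : ∀ z, h p + (((w - p) ⬝ᵥ (V *ᵥ (z - p)) : ℝ) : EReal) ≤ h z) :
    IsProxPt V h w p := by
  intro z
  by_cases hpb : h p = ⊥
  · rw [hpb, EReal.bot_add]; exact bot_le
  by_cases hzt : h z = ⊤
  · rw [hzt, EReal.top_add_coe]; exact le_top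
  have hvz := vi z
  have hpt : h p ≠ ⊤ := by
    intro hc; rw [hc, EReal.top_add_coe] at hvz
    exact hzt (top_le_iff.1 hvz)
  have hzb : h z ≠ ⊥ := by
    intro hc; rw [hc, le_bot_iff, EReal.add_eq_bot_iff] at hvz
    rcases hvz with h' | h'
    · exact hpb h'
    · exact EReal.coe_ne_bot _ h'
  set a := (h p).toReal with ha_def
  set b := (h z).toReal with hb_def
  have ha : h p = (a : EReal) := (EReal.coe_toReal hpt hpb).symm
  have hb : h z = (b : EReal) := (EReal.coe_toReal hzt hzb).symm
  rw [ha, hb, ← EReal.coe_add, ← EReal.coe_add, EReal.coe_le_coe_iff]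
  rw [ha, hb, ← EReal.coe_add, EReal.coe_le_coe_iff] at hvz
  have hw : w - z = (w - p) - (1 : ℝ) • (z - p) := by ext i; simp
  have hexp : (w - z) ⬝ᵥ (V *ᵥ (w - z)) =
      (w - p) ⬝ᵥ (V *ᵥ (w - p)) - 2 * ((w - p) ⬝ᵥ (V *ᵥ (z - p)))
        + (z - p) ⬝ᵥ (V *ᵥ (z - p)) := by
    rw [hw]
    have := quad_expand hVsym (w - p) (z - p) 1
    simpa using this
  have hq : 0 ≤ (z - p) ⬝ᵥ (V *ᵥ (z - p)) := psd_dot_nonneg hVpsd _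
  rw [hexp]; linarith

lemma prox_firm {N : ℕ} {h : (Fin N → ℝ) → EReal} (hh : Gamma0 h)
    {P : Matrix (Fin N) (Fin N) ℝ} (hP : P.PosDef) {w1 w2 p1 p2 : Fin N → ℝ}
    (h1 : IsProxPt P h w1 p1) (h2 : IsProxPt P h w2 p2) :
    (p1 - p2) ⬝ᵥ (P *ᵥ (p1 - p2)) ≤ (p1 - p2) ⬝ᵥ (P *ᵥ (w1 - w2)) := by
  have hPsym : Pᵀ = P := by
    have := hP.isHermitian
    rwa [Matrix.IsHermitian, Matrix.conjTranspose_eq_transpose_of_trivial] at this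
  have hbot := hh.2.1
  have v1 := vi_of_isProxPt hh hP h1 p2
  have v2 := vi_of_isProxPt hh hP h2 p1
  have hp1t : h p1 ≠ ⊤ := prox_ne_top hh.1 h1
  have hp2t : h p2 ≠ ⊤ := prox_ne_top hh.1 h2
  set a := (h p1).toReal
  set b := (h p2).toReal
  have ha : h p1 = (a : EReal) := (EReal.coe_toReal hp1t (hbot p1)).symm
  have hb : h p2 = (b : EReal) := (EReal.coe_toReal hp2t (hbot p2)).symm
  rw [ha, hb, ← EReal.coe_add, EReal.coe_le_coe_iff] at v1
  rw [ha, hb, ← EReal.coe_add, EReal.coe_le_coe_iff] at v2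
  have hsum : (w1 - p1) ⬝ᵥ (P *ᵥ (p2 - p1)) + (w2 - p2) ⬝ᵥ (P *ᵥ (p1 - p2)) ≤ 0 := by
    linarith
  have e1 : (w1 - p1) ⬝ᵥ (P *ᵥ (p2 - p1)) + (w2 - p2) ⬝ᵥ (P *ᵥ (p1 - p2))
      = (p1 - p2) ⬝ᵥ (P *ᵥ (p1 - p2)) - (w1 - w2) ⬝ᵥ (P *ᵥ (p1 - p2)) := by
    have hn : p2 - p1 = -(p1 - p2) := by ext i; simp
    rw [hn]
    simp only [Matrix.mulVec_neg, dotProduct_neg, sub_dotProduct, neg_dotProduct]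
    ring
  rw [e1] at hsum
  have := dot_mulVec_symm hPsym (w1 - w2) (p1 - p2)
  linarith


lemma exists_unique_zero {r : ℕ} (L : (Fin r → ℝ) → (Fin r → ℝ)) (C : ℝ) (hC : 1 ≤ C)
    (lip : ∀ α β, euNorm (L α - L β) ≤ C * euNorm (α - β))
    (mono : ∀ α β, (α - β) ⬝ᵥ (α - β) ≤ (L α - L β) ⬝ᵥ (α - β)) :
    ∃! αs : Fin r → ℝ, L αs = 0 := by
  have hC0 : 0 < C := lt_of_lt_of_le one_pos hC
  have hC2 : (0:ℝ) < C ^ 2 := by positivity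
  set γ : ℝ := 1 / C ^ 2 with hγ_def
  have hγ0 : 0 < γ := by positivity
  set k : ℝ := Real.sqrt (1 - 1 / C ^ 2) with hk_def
  have h1m : 0 ≤ 1 - 1 / C ^ 2 := by
    have : 1 / C ^ 2 ≤ 1 := by
      rw [div_le_one hC2]; nlinarith
    linarith
  have hk0 : 0 ≤ k := Real.sqrt_nonneg _
  have hksq : k ^ 2 = 1 - 1 / C ^ 2 := Real.sq_sqrt h1m
  have hk1 : k < 1 := by nlinarith [hγ0]
  set E := EuclideanSpace ℝ (Fin r)
  set g : E → E := fun v =>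
    (WithLp.equiv 2 (Fin r → ℝ)).symm (L ((WithLp.equiv 2 (Fin r → ℝ)) v)) with hg_def
  set T : E → E := fun v => v - γ • g v with hT_def
  have hsub : ∀ a b : E, a - b =
      (WithLp.equiv 2 (Fin r → ℝ)).symm
        ((WithLp.equiv 2 (Fin r → ℝ)) a - (WithLp.equiv 2 (Fin r → ℝ)) b) := fun a b => rfl
  have hgsub : ∀ a b : E, g a - g b =
      (WithLp.equiv 2 (Fin r → ℝ)).symm
        (L ((WithLp.equiv 2 (Fin r → ℝ)) a) - L ((WithLp.equiv 2 (Fin r → ℝ)) b)) :=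
    fun a b => rfl
  have key : ∀ a b : E, ‖T a - T b‖ ≤ k * ‖a - b‖ := by
    intro a b
    set ya := (WithLp.equiv 2 (Fin r → ℝ)) a
    set yb := (WithLp.equiv 2 (Fin r → ℝ)) b
    have hTT : T a - T b = (a - b) - γ • (g a - g b) := by
      rw [hT_def]; simp only [smul_sub]; abel
    have hD2 : ‖a - b‖ ^ 2 = (ya - yb) ⬝ᵥ (ya - yb) := by
      rw [dot_eq_inner, ← hsub a b, real_inner_self_eq_norm_sq]
    have hI : inner ℝ (a - b) (g a - g b) = (L ya - L yb) ⬝ᵥ (ya - yb) := by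
      rw [dot_eq_inner, ← hsub a b, ← hgsub a b, real_inner_comm]
    have hIge : ‖a - b‖ ^ 2 ≤ inner ℝ (a - b) (g a - g b) := by
      rw [hI, hD2]; exact mono ya yb
    have hM : ‖g a - g b‖ ≤ C * ‖a - b‖ := by
      rw [hgsub a b, hsub a b, ← euNorm_eq, ← euNorm_eq]; exact lip ya yb
    have hsq : ‖T a - T b‖ ^ 2 ≤ (k * ‖a - b‖) ^ 2 := by
      rw [hTT, norm_sub_sq_real, real_inner_smul_right, norm_smul, Real.norm_eq_abs,
        abs_of_pos hγ0]
      have hDnn : 0 ≤ ‖a - b‖ := norm_nonneg _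
      have hMnn : 0 ≤ ‖g a - g b‖ := norm_nonneg _
      have hM2 : ‖g a - g b‖ ^ 2 ≤ (C * ‖a - b‖) ^ 2 := by
        apply pow_le_pow_left₀ hMnn hM
      have hγC : γ * C ^ 2 = 1 := by rw [hγ_def]; field_simp
      have e1 : γ * ‖a - b‖ ^ 2 ≤ γ * inner ℝ (a - b) (g a - g b) :=
        mul_le_mul_of_nonneg_left hIge hγ0.le
      have e2 : (γ * ‖g a - g b‖) ^ 2 ≤ γ * ‖a - b‖ ^ 2 := by
        calc (γ * ‖g a - g b‖) ^ 2 = γ ^ 2 * ‖g a - g b‖ ^ 2 := by ring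
          _ ≤ γ ^ 2 * (C * ‖a - b‖) ^ 2 :=
              mul_le_mul_of_nonneg_left hM2 (sq_nonneg γ)
          _ = γ * (γ * C ^ 2) * ‖a - b‖ ^ 2 := by ring
          _ = γ * ‖a - b‖ ^ 2 := by rw [hγC]; ring
      have e3 : (k * ‖a - b‖) ^ 2 = (1 - γ) * ‖a - b‖ ^ 2 := by
        rw [mul_pow, hksq]
      linarith [e1, e2]
    have h1 : 0 ≤ k * ‖a - b‖ := mul_nonneg hk0 (norm_nonneg _)
    nlinarith [norm_nonneg (T a - T b), hsq]
  set K : NNReal := ⟨k, hk0⟩ with hK_def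
  have hct : ContractingWith K T := by
    constructor
    · exact_mod_cast hk1
    · apply LipschitzWith.of_dist_le_mul
      intro a b
      rw [dist_eq_norm, dist_eq_norm]
      exact key a b
  have : Nonempty E := ⟨0⟩
  set v := ContractingWith.fixedPoint T hct with hv_def
  have hfix : T v = v := ContractingWith.fixedPoint_isFixedPt hct
  have hgv : g v = 0 := by
    have h1 : v - γ • g v = v := hfix
    have h2 : γ • g v = 0 := by
      have := sub_eq_self.mp h1
      exact this
    rcases smul_eq_zero.mp h2 with h | h
    · exact absurd h (ne_of_gt hγ0)
    · exact h
  have hLv : L ((WithLp.equiv 2 (Fin r → ℝ)) v) = 0 := by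
    have := congrArg (WithLp.equiv 2 (Fin r → ℝ)) hgv
    exact this
  refine ⟨(WithLp.equiv 2 (Fin r → ℝ)) v, hLv, ?_⟩
  intro y hy
  have hm := mono y ((WithLp.equiv 2 (Fin r → ℝ)) v)
  rw [hy, hLv, sub_zero, zero_dotProduct] at hm
  have hnn : 0 ≤ (y - (WithLp.equiv 2 (Fin r → ℝ)) v) ⬝ᵥ (y - (WithLp.equiv 2 (Fin r → ℝ)) v) :=
    Finset.sum_nonneg fun i _ => mul_self_nonneg _
  have h0 : (y - (WithLp.equiv 2 (Fin r → ℝ)) v) ⬝ᵥ (y - (WithLp.equiv 2 (Fin r → ℝ)) v) = 0 :=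
    le_antisymm hm hnn
  exact sub_eq_zero.mp (dotProduct_self_eq_zero.mp h0)

lemma dot_self_nonneg {n : ℕ} (v : Fin n → ℝ) : 0 ≤ v ⬝ᵥ v :=
  Finset.sum_nonneg fun i _ => mul_self_nonneg _

lemma euNorm_nonneg {n : ℕ} (v : Fin n → ℝ) : 0 ≤ euNorm v := Real.sqrt_nonneg _

lemma euNorm_sq {n : ℕ} (v : Fin n → ℝ) : euNorm v ^ 2 = v ⬝ᵥ v :=
  Real.sq_sqrt (dot_self_nonneg v)

lemma matOpNorm_nonneg {m n : ℕ} (A : Matrix (Fin m) (Fin n) ℝ) : 0 ≤ matOpNorm A :=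
  norm_nonneg _

lemma euNorm_neg {n : ℕ} (v : Fin n → ℝ) : euNorm (-v) = euNorm v := by
  unfold euNorm; rw [neg_dotProduct, dotProduct_neg, neg_neg]

lemma dot_le_norm {n : ℕ} (a b : Fin n → ℝ) : a ⬝ᵥ b ≤ euNorm a * euNorm b := by
  rw [dot_eq_inner, euNorm_eq, euNorm_eq]; exact real_inner_le_norm _ _

lemma euNorm_mulVec_le {m n : ℕ} (A : Matrix (Fin m) (Fin n) ℝ) (v : Fin n → ℝ) :
    euNorm (A *ᵥ v) ≤ matOpNorm A * euNorm v := by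
  rw [euNorm_eq, euNorm_eq]; exact norm_mulVec_le A v

lemma euNorm_sub_le {n : ℕ} (a b : Fin n → ℝ) : euNorm (a - b) ≤ euNorm a + euNorm b := by
  rw [euNorm_eq, euNorm_eq, euNorm_eq]
  exact norm_sub_le ((WithLp.equiv 2 (Fin n → ℝ)).symm a) ((WithLp.equiv 2 (Fin n → ℝ)).symm b)

/-- Proximity operator in the metric `V = P + U Uᵀ` (rank-`r` update,
`U` with linearly independent columns): the map
`L(α) = Uᵀ(x - prox^P_h(x - P⁻¹ U α)) + α` is Lipschitz with constant
`1 + ‖P^{-1/2} U‖²`, strongly monotone with modulus `1`, has a unique zero `α*`, and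
`prox^V_h(x) = prox^P_h(x - P⁻¹ U α*)`.  (`S` is the principal square root of `P`.) -/
theorem stmt_2 {N r : ℕ} (hr : r ≤ N)
    (h : (Fin N → ℝ) → EReal) (hh : Gamma0 h)
    (P : Matrix (Fin N) (Fin N) ℝ) (hP : P.PosDef)
    (U : Matrix (Fin N) (Fin r) ℝ)
    (hU : LinearIndependent ℝ (fun j : Fin r => fun i : Fin N => U i j))
    (S : Matrix (Fin N) (Fin N) ℝ) (hS : S.PosSemidef) (hSsq : S * S = P)
    (V : Matrix (Fin N) (Fin N) ℝ) (hV : V = P + U * Uᵀ)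
    (proxP : (Fin N → ℝ) → (Fin N → ℝ))
    (hproxP : ∀ w : Fin N → ℝ, IsProxPt P h w (proxP w))
    (x : Fin N → ℝ)
    (L : (Fin r → ℝ) → (Fin r → ℝ))
    (hL : ∀ α : Fin r → ℝ, L α = Uᵀ *ᵥ (x - proxP (x - P⁻¹ *ᵥ (U *ᵥ α))) + α) :
    (∀ α β : Fin r → ℝ,
        euNorm (L α - L β) ≤ (1 + matOpNorm (S⁻¹ * U) ^ 2) * euNorm (α - β)) ∧
    (∀ α β : Fin r → ℝ, (L α - L β) ⬝ᵥ (α - β) ≥ (α - β) ⬝ᵥ (α - β)) ∧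
    (∃! αs : Fin r → ℝ, L αs = 0) ∧
    (∀ αs : Fin r → ℝ, L αs = 0 →
        IsProxPt V h x (proxP (x - P⁻¹ *ᵥ (U *ᵥ αs)))) := by
  have hPsym : Pᵀ = P := by
    have := hP.isHermitian
    rwa [Matrix.IsHermitian, Matrix.conjTranspose_eq_transpose_of_trivial] at this
  have hSsym : Sᵀ = S := by
    have := hS.isHermitian
    rwa [Matrix.IsHermitian, Matrix.conjTranspose_eq_transpose_of_trivial] at this
  have hPdet : IsUnit P.det := hP.det_pos.ne'.isUnit
  have hSdet : IsUnit S.det := by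
    refine isUnit_iff_ne_zero.mpr fun h0 => ?_
    have hd : S.det * S.det = P.det := by rw [← Matrix.det_mul, hSsq]
    rw [h0, mul_zero] at hd
    exact hP.det_pos.ne' hd.symm
  have hSS : S⁻¹ * S = 1 := Matrix.nonsing_inv_mul S hSdet
  have hPP : P * P⁻¹ = 1 := Matrix.mul_nonsing_inv P hPdet
  have hSinvT : S⁻¹ᵀ = S⁻¹ := by rw [Matrix.transpose_nonsing_inv, hSsym]
  have firm : ∀ α β : Fin r → ℝ,
      (proxP (x - P⁻¹ *ᵥ (U *ᵥ α)) - proxP (x - P⁻¹ *ᵥ (U *ᵥ β))) ⬝ᵥ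
          (P *ᵥ (proxP (x - P⁻¹ *ᵥ (U *ᵥ α)) - proxP (x - P⁻¹ *ᵥ (U *ᵥ β)))) ≤
        -((proxP (x - P⁻¹ *ᵥ (U *ᵥ α)) - proxP (x - P⁻¹ *ᵥ (U *ᵥ β))) ⬝ᵥ
          (U *ᵥ (α - β))) := by
    intro α β
    have hfi := prox_firm hh hP (hproxP (x - P⁻¹ *ᵥ (U *ᵥ α))) (hproxP (x - P⁻¹ *ᵥ (U *ᵥ β)))
    have hwd : (x - P⁻¹ *ᵥ (U *ᵥ α)) - (x - P⁻¹ *ᵥ (U *ᵥ β))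
        = -(P⁻¹ *ᵥ (U *ᵥ (α - β))) := by
      rw [Matrix.mulVec_sub, Matrix.mulVec_sub]
      abel
    rw [hwd] at hfi
    have e2 : P *ᵥ (-(P⁻¹ *ᵥ (U *ᵥ (α - β)))) = -(U *ᵥ (α - β)) := by
      rw [Matrix.mulVec_neg, Matrix.mulVec_mulVec, hPP, Matrix.one_mulVec]
    rw [e2, dotProduct_neg] at hfi
    exact hfi
  have hLdiff : ∀ α β : Fin r → ℝ, L α - L β = (α - β) -
      Uᵀ *ᵥ (proxP (x - P⁻¹ *ᵥ (U *ᵥ α)) - proxP (x - P⁻¹ *ᵥ (U *ᵥ β))) := by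
    intro α β
    rw [hL α, hL β]
    simp only [Matrix.mulVec_sub]
    abel
  have mono : ∀ α β : Fin r → ℝ, (α - β) ⬝ᵥ (α - β) ≤ (L α - L β) ⬝ᵥ (α - β) := by
    intro α β
    have hfi := firm α β
    have hLd := hLdiff α β
    rw [hLd]
    have ht := dot_transpose_mulVec U
      (proxP (x - P⁻¹ *ᵥ (U *ᵥ α)) - proxP (x - P⁻¹ *ᵥ (U *ᵥ β))) (α - β)
    have hq := psd_dot_nonneg hP.posSemidef
      (proxP (x - P⁻¹ *ᵥ (U *ᵥ α)) - proxP (x - P⁻¹ *ᵥ (U *ᵥ β)))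
    have hsd : ((α - β) - Uᵀ *ᵥ (proxP (x - P⁻¹ *ᵥ (U *ᵥ α)) - proxP (x - P⁻¹ *ᵥ (U *ᵥ β))))
          ⬝ᵥ (α - β)
        = (α - β) ⬝ᵥ (α - β)
          - (Uᵀ *ᵥ (proxP (x - P⁻¹ *ᵥ (U *ᵥ α)) - proxP (x - P⁻¹ *ᵥ (U *ᵥ β)))) ⬝ᵥ (α - β) :=
      sub_dotProduct _ _ _
    linarith [hfi, ht, hq, hsd]
  have lip : ∀ α β : Fin r → ℝ,
      euNorm (L α - L β) ≤ (1 + matOpNorm (S⁻¹ * U) ^ 2) * euNorm (α - β) := by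
    intro α β
    have hfi := firm α β
    have hLd := hLdiff α β
    set d := proxP (x - P⁻¹ *ᵥ (U *ᵥ α)) - proxP (x - P⁻¹ *ᵥ (U *ᵥ β)) with hd_def
    set δ := α - β with hδ_def
    have hSd2 : (S *ᵥ d) ⬝ᵥ (S *ᵥ d) = d ⬝ᵥ (P *ᵥ d) := by
      rw [← hSsq, ← Matrix.mulVec_mulVec]
      exact (dot_mulVec_flip hSsym d (S *ᵥ d)).symm
    have hdU : d ⬝ᵥ (U *ᵥ δ) = (S *ᵥ d) ⬝ᵥ ((S⁻¹ * U) *ᵥ δ) := by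
      rw [← Matrix.mulVec_mulVec, ← dot_transpose_mulVec S⁻¹ (S *ᵥ d) (U *ᵥ δ),
        hSinvT, Matrix.mulVec_mulVec, hSS, Matrix.one_mulVec]
    have hSd_le : euNorm (S *ᵥ d) ≤ matOpNorm (S⁻¹ * U) * euNorm δ := by
      have h1 : (S *ᵥ d) ⬝ᵥ (S *ᵥ d) ≤ -((S *ᵥ d) ⬝ᵥ ((S⁻¹ * U) *ᵥ δ)) := by
        rw [hSd2, ← hdU]; exact hfi
      have h3 : (-(S *ᵥ d)) ⬝ᵥ ((S⁻¹ * U) *ᵥ δ)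
          ≤ euNorm (S *ᵥ d) * (matOpNorm (S⁻¹ * U) * euNorm δ) := by
        calc (-(S *ᵥ d)) ⬝ᵥ ((S⁻¹ * U) *ᵥ δ)
            ≤ euNorm (-(S *ᵥ d)) * euNorm ((S⁻¹ * U) *ᵥ δ) := dot_le_norm _ _
          _ = euNorm (S *ᵥ d) * euNorm ((S⁻¹ * U) *ᵥ δ) := by rw [euNorm_neg]
          _ ≤ euNorm (S *ᵥ d) * (matOpNorm (S⁻¹ * U) * euNorm δ) :=
              mul_le_mul_of_nonneg_left (euNorm_mulVec_le _ _) (euNorm_nonneg _)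
      have h4 : euNorm (S *ᵥ d) ^ 2 ≤ euNorm (S *ᵥ d) * (matOpNorm (S⁻¹ * U) * euNorm δ) := by
        rw [euNorm_sq, neg_dotProduct] at *
        linarith [h1, h3]
      rcases eq_or_lt_of_le (euNorm_nonneg (S *ᵥ d)) with h0 | h0
      · rw [← h0]
        exact mul_nonneg (matOpNorm_nonneg _) (euNorm_nonneg _)
      · nlinarith [h4, h0]
    have hUd_eq : Uᵀ *ᵥ d = (S⁻¹ * U)ᵀ *ᵥ (S *ᵥ d) := by
      rw [Matrix.transpose_mul, hSinvT, ← Matrix.mulVec_mulVec,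
        Matrix.mulVec_mulVec d S⁻¹ S, hSS, Matrix.one_mulVec]
    have hUd_le : euNorm (Uᵀ *ᵥ d) ≤ matOpNorm (S⁻¹ * U) ^ 2 * euNorm δ := by
      rw [hUd_eq]
      calc euNorm ((S⁻¹ * U)ᵀ *ᵥ (S *ᵥ d))
          ≤ matOpNorm (S⁻¹ * U)ᵀ * euNorm (S *ᵥ d) := euNorm_mulVec_le _ _
        _ = matOpNorm (S⁻¹ * U) * euNorm (S *ᵥ d) := by rw [matOpNorm_transpose]
        _ ≤ matOpNorm (S⁻¹ * U) * (matOpNorm (S⁻¹ * U) * euNorm δ) :=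
            mul_le_mul_of_nonneg_left hSd_le (matOpNorm_nonneg _)
        _ = matOpNorm (S⁻¹ * U) ^ 2 * euNorm δ := by ring
    calc euNorm (L α - L β) = euNorm (δ - Uᵀ *ᵥ d) := by rw [hLd]
      _ ≤ euNorm δ + euNorm (Uᵀ *ᵥ d) := euNorm_sub_le _ _
      _ ≤ euNorm δ + matOpNorm (S⁻¹ * U) ^ 2 * euNorm δ := by linarith
      _ = (1 + matOpNorm (S⁻¹ * U) ^ 2) * euNorm δ := by ring
  have hC1 : (1 : ℝ) ≤ 1 + matOpNorm (S⁻¹ * U) ^ 2 := by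
    nlinarith [sq_nonneg (matOpNorm (S⁻¹ * U))]
  have exuniq := exists_unique_zero L (1 + matOpNorm (S⁻¹ * U) ^ 2) hC1 lip mono
  have hVsym : Vᵀ = V := by
    rw [hV, Matrix.transpose_add, hPsym, Matrix.transpose_mul, Matrix.transpose_transpose]
  have hVpsd : V.PosSemidef := by
    rw [hV]
    refine hP.posSemidef.add ?_
    have := Matrix.posSemidef_self_mul_conjTranspose U
    rwa [Matrix.conjTranspose_eq_transpose_of_trivial] at this
  refine ⟨lip, fun α β => mono α β, exuniq, ?_⟩
  intro αs hαs
  refine isProxPt_of_vi hVsym hVpsd fun z => ?_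
  have vi := vi_of_isProxPt hh hP (hproxP (x - P⁻¹ *ᵥ (U *ᵥ αs))) z
  have h0 := hL αs
  rw [hαs] at h0
  set p := proxP (x - P⁻¹ *ᵥ (U *ᵥ αs)) with hp_def
  have hαs' : αs = -(Uᵀ *ᵥ (x - p)) := eq_neg_of_add_eq_zero_right h0.symm
  have hUαs : U *ᵥ αs = -((U * Uᵀ) *ᵥ (x - p)) := by
    rw [hαs', Matrix.mulVec_neg, Matrix.mulVec_mulVec]
  have hkey : P *ᵥ ((x - P⁻¹ *ᵥ (U *ᵥ αs)) - p) = V *ᵥ (x - p) := by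
    have e : (x - P⁻¹ *ᵥ (U *ᵥ αs)) - p = (x - p) - P⁻¹ *ᵥ (U *ᵥ αs) := by abel
    rw [e, Matrix.mulVec_sub, Matrix.mulVec_mulVec, hPP, Matrix.one_mulVec, hUαs,
      hV, Matrix.add_mulVec, sub_neg_eq_add]
  have hdots : ((x - P⁻¹ *ᵥ (U *ᵥ αs)) - p) ⬝ᵥ (P *ᵥ (z - p))
      = (x - p) ⬝ᵥ (V *ᵥ (z - p)) := by
    rw [dot_mulVec_flip hPsym, dot_mulVec_flip hVsym, hkey]
  rw [hdots] at vi
  exact vi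
end
end

section
/- Let h ∈ Γ₀(ℝ^N), let P be a symmetric positive definite N×N matrix, let U₁ ∈ ℝ^{N×r₁} and U₂ ∈ ℝ^{N×r₂} have linearly independent columns, Q₁ = U₁U₁^T, Q₂ = U₂U₂^T, and assume V = P + Q₁ − Q₂ is symmetric positive definite. Set P₁ = P + Q₁ (which is symmetric positive definite). Then for every x ∈ ℝ^N the map M : ℝ^{r₂} → ℝ^{r₂} defined by M(α) = U₂^T( x − prox^{P₁}_h( x + P₁^{-1} U₂ α ) ) + α has a unique zero α₂* ∈ ℝ^{r₂}, and prox^V_h(x) = prox^{P₁}_h( x + P₁^{-1} U₂ α₂* ); moreover prox^{P₁}_h( x + P₁^{-1} U₂ α₂* ) = prox^P_h( x + P₁^{-1} U₂ α₂* − P^{-1} U₁ α₁* ), where α₁* is the unique zero of the map α ↦ U₁^T( (x + P₁^{-1} U₂ α₂*) − prox^P_h( (x + P₁^{-1} U₂ α₂*) − P^{-1} U₁ α ) ) + α. -/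
open Matrix

noncomputable section

namespace Stmt4Aux

open Filter Topology Set

variable {N : ℕ}

/-! ### Linear algebra helpers -/

lemma dot_shift (W : Matrix (Fin N) (Fin N) ℝ) (hW : Wᵀ = W) (u v : Fin N → ℝ) :
    u ⬝ᵥ (W *ᵥ v) = (W *ᵥ u) ⬝ᵥ v := by
  rw [dotProduct_mulVec, ← mulVec_transpose, hW]

lemma quad_expand (W : Matrix (Fin N) (Fin N) ℝ) (hW : Wᵀ = W) (a d : Fin N → ℝ) :
    (a - d) ⬝ᵥ (W *ᵥ (a - d)) =
      a ⬝ᵥ (W *ᵥ a) - 2 * (a ⬝ᵥ (W *ᵥ d)) + d ⬝ᵥ (W *ᵥ d) := by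
  have h1 : d ⬝ᵥ (W *ᵥ a) = a ⬝ᵥ (W *ᵥ d) := by
    rw [dot_shift W hW, dotProduct_comm]
  simp only [mulVec_sub, dotProduct_sub, sub_dotProduct, h1]
  ring

lemma quad_nonneg {W : Matrix (Fin N) (Fin N) ℝ} (hW : W.PosSemidef) (d : Fin N → ℝ) :
    0 ≤ d ⬝ᵥ (W *ᵥ d) := by
  have := hW.dotProduct_mulVec_nonneg d; simpa using this

lemma dotProduct_self_nonneg' (v : Fin N → ℝ) : (0:ℝ) ≤ v ⬝ᵥ v := by
  apply Finset.sum_nonneg; intro i _; exact mul_self_nonneg _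

lemma sup_norm_sq_le (v : Fin N → ℝ) : ‖v‖ ^ 2 ≤ v ⬝ᵥ v := by
  have h0 := dotProduct_self_nonneg' v
  have hn : ‖v‖ ≤ Real.sqrt (v ⬝ᵥ v) := by
    apply (pi_norm_le_iff_of_nonneg (Real.sqrt_nonneg _)).2
    intro i
    rw [Real.norm_eq_abs, ← Real.sqrt_sq_eq_abs]
    apply Real.sqrt_le_sqrt
    have : v i ^ 2 ≤ ∑ j, v j * v j := by
      have h := Finset.single_le_sum (f := fun j => v j * v j)
        (fun j _ => mul_self_nonneg (v j)) (Finset.mem_univ i)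
      simpa [sq] using h
    simpa [dotProduct] using this
  calc ‖v‖ ^ 2 ≤ Real.sqrt (v ⬝ᵥ v) ^ 2 := by
        apply pow_le_pow_left₀ (norm_nonneg _) hn
      _ = v ⬝ᵥ v := Real.sq_sqrt h0

lemma posdef_quad_lb {W : Matrix (Fin N) (Fin N) ℝ} (hW : W.PosDef) :
    ∃ lam : ℝ, 0 < lam ∧ ∀ v : Fin N → ℝ, lam * (v ⬝ᵥ v) ≤ v ⬝ᵥ (W *ᵥ v) := by
  rcases Nat.eq_zero_or_pos N with hN | hN
  · refine ⟨1, one_pos, fun v => ?_⟩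
    subst hN
    simp [dotProduct]
  · set S : Set (Fin N → ℝ) := {d | d ⬝ᵥ d = 1} with hS
    have hclosed : IsClosed S := isClosed_eq (by simp only [dotProduct]; fun_prop) continuous_const
    have hbdd : Bornology.IsBounded S := by
      apply (Metric.isBounded_closedBall (x := (0 : Fin N → ℝ)) (r := 1)).subset
      intro d hd
      simp only [Metric.mem_closedBall, dist_zero_right]
      apply (pi_norm_le_iff_of_nonneg zero_le_one).2
      intro i
      rw [Real.norm_eq_abs, abs_le]
      have h1 : d i * d i ≤ 1 := by
        have := Finset.single_le_sum (f := fun j => d j * d j)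
          (fun j _ => mul_self_nonneg (d j)) (Finset.mem_univ i)
        simpa [hd.symm ▸ (rfl : (1:ℝ) = 1), dotProduct] using this.trans_eq hd
      constructor <;> nlinarith
    have hcpt : IsCompact S := Metric.isCompact_of_isClosed_isBounded hclosed hbdd
    have hne : S.Nonempty := by
      refine ⟨Pi.single ⟨0, hN⟩ 1, ?_⟩
      simp only [hS, mem_setOf_eq, dotProduct, Pi.single_apply]
      rw [Finset.sum_eq_single ⟨0, hN⟩] <;> simp
    have hcont : ContinuousOn (fun d => d ⬝ᵥ (W *ᵥ d)) S := by
      apply Continuous.continuousOn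
      simp only [dotProduct, mulVec]; fun_prop
    obtain ⟨d₀, hd₀S, hmin⟩ := hcpt.exists_isMinOn hne hcont
    set lam := d₀ ⬝ᵥ (W *ᵥ d₀) with hlam
    have hd₀ne : d₀ ≠ 0 := by
      intro h0
      rw [h0] at hd₀S
      simp [hS, dotProduct] at hd₀S
    have hlampos : 0 < lam := by
      have := hW.dotProduct_mulVec_pos hd₀ne
      simpa using this
    refine ⟨lam, hlampos, fun v => ?_⟩
    rcases eq_or_ne v 0 with rfl | hv
    · simp
    · have hvv : 0 < v ⬝ᵥ v :=
        lt_of_le_of_ne (dotProduct_self_nonneg' v) (fun hc => hv (dotProduct_self_eq_zero.1 hc.symm))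
      set c := (Real.sqrt (v ⬝ᵥ v))⁻¹ with hc
      have hsq : c ^ 2 = (v ⬝ᵥ v)⁻¹ := by
        rw [hc, ← Real.sqrt_inv]
        exact Real.sq_sqrt (by positivity)
      have hmem : (c • v) ∈ S := by
        simp only [hS, mem_setOf_eq, smul_dotProduct, dotProduct_smul, smul_eq_mul]
        rw [← mul_assoc, ← sq, hsq]
        field_simp
      have h1 : lam ≤ (c • v) ⬝ᵥ (W *ᵥ (c • v)) := hmin hmem
      have h2 : (c • v) ⬝ᵥ (W *ᵥ (c • v)) = c ^ 2 * (v ⬝ᵥ (W *ᵥ v)) := by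
        rw [smul_dotProduct, mulVec_smul, dotProduct_smul]
        simp [sq, smul_eq_mul]; ring
      rw [h2, hsq] at h1
      have := mul_le_mul_of_nonneg_left h1 hvv.le
      calc lam * (v ⬝ᵥ v) = (v ⬝ᵥ v) * lam := mul_comm _ _
        _ ≤ (v ⬝ᵥ v) * ((v ⬝ᵥ v)⁻¹ * (v ⬝ᵥ (W *ᵥ v))) := this
        _ = v ⬝ᵥ (W *ᵥ v) := by field_simp

/-! ### Minimization of lsc functions on compact sets -/

lemma lsc_exists_min {K : Set (Fin N → ℝ)} (hK : IsCompact K) (hne : K.Nonempty)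
    {f : (Fin N → ℝ) → EReal} (hf : LowerSemicontinuous f) :
    ∃ p ∈ K, ∀ z ∈ K, f p ≤ f z := by
  obtain ⟨z₁, hz₁⟩ := hne
  have hSne : (f '' K).Nonempty := ⟨f z₁, mem_image_of_mem f hz₁⟩
  set m := sInf (f '' K) with hm
  obtain ⟨u, -, hu_tendsto, hu_mem⟩ := exists_seq_tendsto_sInf hSne (OrderBot.bddBelow _)
  choose g hgK hgu using fun n => hu_mem n
  obtain ⟨z, hzK, φ, hφ, hconv⟩ := hK.tendsto_subseq hgK
  refine ⟨z, hzK, fun z' hz' => ?_⟩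
  have hle : f z ≤ m := by
    by_contra hlt
    push_neg at hlt
    obtain ⟨c, hc1, hc2⟩ := exists_between hlt
    have hev1 : ∀ᶠ n in atTop, c < f (g (φ n)) :=
      hconv.eventually (hf z c hc2)
    have huφ : Tendsto (fun n => u (φ n)) atTop (𝓝 m) :=
      hu_tendsto.comp hφ.tendsto_atTop
    have hev2 : ∀ᶠ n in atTop, u (φ n) < c :=
      huφ.eventually (Filter.Tendsto.eventually_lt_const hc1 tendsto_id)
    obtain ⟨n, h1, h2⟩ := (hev1.and hev2).exists
    rw [hgu (φ n)] at h1
    exact absurd h1 (not_lt.2 h2.le)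
  exact hle.trans (csInf_le (OrderBot.bddBelow _) (mem_image_of_mem f hz'))

/-! ### Prox points: basic properties -/

lemma prox_ne_top {W : Matrix (Fin N) (Fin N) ℝ} {h : (Fin N → ℝ) → EReal}
    {w p : Fin N → ℝ} (hp : IsProxPt W h w p) (hproper : ∃ z, h z ≠ ⊤) : h p ≠ ⊤ := by
  obtain ⟨z₀, hz₀⟩ := hproper
  intro htop
  have := hp z₀
  rw [htop, EReal.top_add_of_ne_bot (EReal.coe_ne_bot _)] at this
  have h2 : h z₀ + ((1 / 2 * ((w - z₀) ⬝ᵥ (W *ᵥ (w - z₀))) : ℝ) : EReal) < ⊤ :=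
    EReal.add_lt_top hz₀ (EReal.coe_ne_top _)
  exact h2.ne (top_le_iff.1 this)

/-- Subgradient inequality from the prox variational inequality. -/
lemma subgrad_of_prox {W : Matrix (Fin N) (Fin N) ℝ} (hW : Wᵀ = W)
    {h : (Fin N → ℝ) → EReal} (hh : Gamma0 h) {w p : Fin N → ℝ}
    (hp : IsProxPt W h w p) (hpsd : W.PosSemidef) :
    ∀ z, h p + (((W *ᵥ (w - p)) ⬝ᵥ (z - p) : ℝ) : EReal) ≤ h z := by
  obtain ⟨hproper, hbot, hlsc, hconv⟩ := hh
  have hptop : h p ≠ ⊤ := prox_ne_top hp hproper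
  set a := (h p).toReal with ha
  have hpa : h p = (a : EReal) := (EReal.coe_toReal hptop (hbot p)).symm
  intro z
  rcases eq_or_ne (h z) ⊤ with hz | hz
  · rw [hz]; exact le_top
  set b := (h z).toReal with hb
  have hzb : h z = (b : EReal) := (EReal.coe_toReal hz (hbot z)).symm
  set d := z - p with hd
  set g := W *ᵥ (w - p) with hg
  set Qd := d ⬝ᵥ (W *ᵥ d) with hQd
  have hQdnn : 0 ≤ Qd := quad_nonneg hpsd d
  have key : ∀ t : ℝ, 0 < t → t ≤ 1 → a + g ⬝ᵥ d ≤ b + t / 2 * Qd := by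
    intro t ht ht1
    have hzt_eq : p + t • d = t • z + (1 - t) • p := by
      ext i; simp [hd, Pi.smul_apply, smul_eq_mul]; ring
    set zt := p + t • d with hzt
    have hconv' := hconv z p t ht.le ht1
    rw [← hzt_eq, hpa, hzb] at hconv'
    have hconv'' : h zt ≤ ((t * b + (1 - t) * a : ℝ) : EReal) := by
      rw [EReal.coe_add, EReal.coe_mul, EReal.coe_mul] at *
      exact hconv'.trans_eq rfl
    have hzttop : h zt ≠ ⊤ := ne_top_of_le_ne_top (EReal.coe_ne_top _) hconv''
    set ct := (h zt).toReal with hct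
    have hztc : h zt = (ct : EReal) := (EReal.coe_toReal hzttop (hbot zt)).symm
    rw [hztc, EReal.coe_le_coe_iff] at hconv''
    have hineq := hp zt
    rw [hpa, hztc, ← EReal.coe_add, ← EReal.coe_add, EReal.coe_le_coe_iff] at hineq
    have hwz : w - zt = (w - p) - t • d := by rw [hzt]; abel
    have hexp : (w - zt) ⬝ᵥ (W *ᵥ (w - zt)) =
        (w - p) ⬝ᵥ (W *ᵥ (w - p)) - 2 * (t * (g ⬝ᵥ d)) + t ^ 2 * Qd := by
      rw [hwz, quad_expand W hW]
      rw [mulVec_smul, dotProduct_smul, smul_dotProduct, dotProduct_smul]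
      rw [dot_shift W hW (w - p) d]
      simp [hg, hQd, smul_eq_mul, sq]; ring
    rw [hexp] at hineq
    have key2 : t * (a + g ⬝ᵥ d) ≤ t * (b + t / 2 * Qd) := by nlinarith
    exact (mul_le_mul_iff_right₀ ht).1 key2
  have hreal : a + g ⬝ᵥ d ≤ b := by
    by_contra hcon
    push_neg at hcon
    set ε := (a + g ⬝ᵥ d - b) / 2 with hε
    have hεpos : 0 < ε := by simp [hε]; linarith
    set t := min 1 (ε / (Qd + 1)) with ht
    have ht0 : 0 < t := lt_min one_pos (by positivity)
    have ht1 : t ≤ 1 := min_le_left _ _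
    have htQ : t / 2 * Qd ≤ ε := by
      have h1 : t ≤ ε / (Qd + 1) := min_le_right _ _
      have h2 : t * Qd ≤ ε / (Qd + 1) * Qd :=
        mul_le_mul_of_nonneg_right h1 hQdnn
      have h3 : ε / (Qd + 1) * Qd ≤ ε := by
        rw [div_mul_eq_mul_div, div_le_iff₀ (by linarith)]
        nlinarith
      nlinarith
    have := key t ht0 ht1
    linarith
  rw [hpa, hzb, ← EReal.coe_add, EReal.coe_le_coe_iff]
  exact hreal

/-- Prox variational inequality from the subgradient inequality. -/
lemma prox_of_subgrad {W : Matrix (Fin N) (Fin N) ℝ} (hW : Wᵀ = W)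
    (hpsd : W.PosSemidef) {h : (Fin N → ℝ) → EReal} (hbot : ∀ z, h z ≠ ⊥)
    {w p : Fin N → ℝ}
    (hsub : ∀ z, h p + (((W *ᵥ (w - p)) ⬝ᵥ (z - p) : ℝ) : EReal) ≤ h z) :
    IsProxPt W h w p := by
  intro z
  rcases eq_or_ne (h z) ⊤ with hz | hz
  · rw [hz, EReal.top_add_of_ne_bot (EReal.coe_ne_bot _)]
    exact le_top
  have hptop : h p ≠ ⊤ := by
    intro htop
    have := hsub z
    rw [htop, EReal.top_add_of_ne_bot (EReal.coe_ne_bot _)] at this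
    exact hz (top_le_iff.1 this)
  set a := (h p).toReal with ha
  have hpa : h p = (a : EReal) := (EReal.coe_toReal hptop (hbot p)).symm
  set b := (h z).toReal with hb
  have hzb : h z = (b : EReal) := (EReal.coe_toReal hz (hbot z)).symm
  have hsubz := hsub z
  rw [hpa, hzb, ← EReal.coe_add, EReal.coe_le_coe_iff] at hsubz
  rw [hpa, hzb, ← EReal.coe_add, ← EReal.coe_add, EReal.coe_le_coe_iff]
  have hwz : w - z = (w - p) - (z - p) := by abel
  have hexp : (w - z) ⬝ᵥ (W *ᵥ (w - z)) =
      (w - p) ⬝ᵥ (W *ᵥ (w - p)) - 2 * ((W *ᵥ (w - p)) ⬝ᵥ (z - p))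
        + (z - p) ⬝ᵥ (W *ᵥ (z - p)) := by
    rw [hwz, quad_expand W hW, dot_shift W hW (w - p) (z - p)]
  have hQnn : 0 ≤ (z - p) ⬝ᵥ (W *ᵥ (z - p)) := quad_nonneg hpsd _
  rw [hexp]
  linarith

/-- Uniqueness of the prox point for a positive definite metric. -/
lemma prox_unique {W : Matrix (Fin N) (Fin N) ℝ} (hW : Wᵀ = W) (hpd : W.PosDef)
    {h : (Fin N → ℝ) → EReal} (hh : Gamma0 h) {w p p' : Fin N → ℝ}
    (hp : IsProxPt W h w p) (hp' : IsProxPt W h w p') : p = p' := by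
  have hpsd := hpd.posSemidef
  have h1 := subgrad_of_prox hW hh hp hpsd p'
  have h2 := subgrad_of_prox hW hh hp' hpsd p
  obtain ⟨hproper, hbot, -, -⟩ := hh
  have hptop : h p ≠ ⊤ := prox_ne_top hp hproper
  have hptop' : h p' ≠ ⊤ := prox_ne_top hp' hproper
  set a := (h p).toReal with ha
  have hpa : h p = (a : EReal) := (EReal.coe_toReal hptop (hbot p)).symm
  set a' := (h p').toReal with ha'
  have hpa' : h p' = (a' : EReal) := (EReal.coe_toReal hptop' (hbot p')).symm
  rw [hpa, hpa', ← EReal.coe_add, EReal.coe_le_coe_iff] at h1 h2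
  by_contra hne
  have hd : p' - p ≠ 0 := sub_ne_zero.2 (fun e => hne e.symm)
  have hpos : 0 < (p' - p) ⬝ᵥ (W *ᵥ (p' - p)) := by
    have := hpd.dotProduct_mulVec_pos hd; simpa using this
  have hkey : (W *ᵥ (w - p)) ⬝ᵥ (p' - p) + (W *ᵥ (w - p')) ⬝ᵥ (p - p') ≤ 0 := by linarith
  have hcalc : (W *ᵥ (w - p)) ⬝ᵥ (p' - p) + (W *ᵥ (w - p')) ⬝ᵥ (p - p')
      = (p' - p) ⬝ᵥ (W *ᵥ (p' - p)) := by
    have e1 : p - p' = -(p' - p) := by abel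
    rw [e1, dotProduct_neg, ← sub_eq_add_neg, ← sub_dotProduct, ← mulVec_sub]
    have e2 : w - p - (w - p') = p' - p := by abel
    rw [e2, ← dot_shift W hW]
  rw [hcalc] at hkey
  linarith

/-! ### Existence of the prox point -/

lemma coercive_aux {lam d C A s : ℝ} (hlam : 0 < lam) (hd : 0 < d) (hC : 0 ≤ C) (hA : 0 < A)
    (hs : 2 / (lam * d) + Real.sqrt (2 * (C + d * A) / (lam * d)) ≤ s) :
    s + C + d * A ≤ d * lam / 2 * s ^ 2 := by
  set u := 2 / (lam * d) with hu
  set v := Real.sqrt (2 * (C + d * A) / (lam * d)) with hv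
  have hld : 0 < lam * d := mul_pos hlam hd
  have hupos : 0 < u := by positivity
  have hvnn : 0 ≤ v := Real.sqrt_nonneg _
  have huu : lam * d * u = 2 := by rw [hu]; field_simp
  have hvv : lam * d * v ^ 2 = 2 * (C + d * A) := by
    rw [hv, Real.sq_sqrt (by positivity)]; field_simp
  have hsnn : 0 ≤ s := le_trans (by positivity) hs
  have hvs : v ≤ s := by linarith
  nlinarith [mul_le_mul_of_nonneg_left (mul_le_mul_of_nonneg_right hs hsnn) hld.le,
    mul_le_mul_of_nonneg_left (mul_le_mul_of_nonneg_left hvs hvnn) hld.le, huu, hvv]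

lemma quad_continuous (W : Matrix (Fin N) (Fin N) ℝ) (x : Fin N → ℝ) :
    Continuous fun z : Fin N → ℝ => (1 : ℝ) / 2 * ((x - z) ⬝ᵥ (W *ᵥ (x - z))) := by
  simp only [dotProduct, mulVec, Pi.sub_apply]
  fun_prop

lemma objective_lsc (W : Matrix (Fin N) (Fin N) ℝ) (x : Fin N → ℝ)
    {h : (Fin N → ℝ) → EReal} (hlsc : LowerSemicontinuous h) :
    LowerSemicontinuous
      (fun z => h z + ((1 / 2 * ((x - z) ⬝ᵥ (W *ᵥ (x - z))) : ℝ) : EReal)) := by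
  apply LowerSemicontinuous.add' hlsc
  · exact (Continuous.comp continuous_coe_real_ereal (quad_continuous W x)).lowerSemicontinuous
  · intro z
    exact EReal.continuousAt_add (Or.inr (EReal.coe_ne_bot _)) (Or.inr (EReal.coe_ne_top _))

/-- Existence of the proximal point for a positive definite metric. -/
lemma exists_prox {W : Matrix (Fin N) (Fin N) ℝ} (hW : W.PosDef)
    {h : (Fin N → ℝ) → EReal} (hh : Gamma0 h) (x : Fin N → ℝ) :
    ∃ p, IsProxPt W h x p := by
  obtain ⟨⟨z₀, hz₀⟩, hbot, hlsc, hconv⟩ := hh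
  set q : (Fin N → ℝ) → ℝ := fun z => 1 / 2 * ((x - z) ⬝ᵥ (W *ᵥ (x - z))) with hq
  set f : (Fin N → ℝ) → EReal := fun z => h z + (q z : EReal) with hf
  have hflsc : LowerSemicontinuous f := objective_lsc W x hlsc
  set a₀ := (h z₀).toReal with ha₀
  have hz₀c : h z₀ = (a₀ : EReal) := (EReal.coe_toReal hz₀ (hbot z₀)).symm
  have hlt : ((a₀ - 1 : ℝ) : EReal) < h z₀ := by
    rw [hz₀c, EReal.coe_lt_coe_iff]; linarith
  obtain ⟨δ, hδpos, hball⟩ := Metric.eventually_nhds_iff.1 (hlsc z₀ _ hlt)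
  set δ' := δ / 2 with hδ'
  have hδ'pos : 0 < δ' := by positivity
  have hlb : ∀ z, ((a₀ - 1 - dist z z₀ / δ' : ℝ) : EReal) ≤ h z := by
    intro z
    by_cases hcase : dist z z₀ ≤ δ'
    · have h1 : ((a₀ - 1 : ℝ) : EReal) < h z :=
        hball (by rw [hδ'] at hcase; linarith [dist_nonneg (x := z) (y := z₀)])
      refine le_trans ?_ h1.le
      rw [EReal.coe_le_coe_iff]
      have h2 : 0 ≤ dist z z₀ / δ' := by positivity
      linarith
    · push_neg at hcase
      set r := dist z z₀ with hr
      have hrpos : 0 < r := lt_trans hδ'pos hcase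
      set t := δ' / r with ht
      have htpos : 0 < t := by positivity
      have ht1 : t ≤ 1 := by
        rw [ht, div_le_one hrpos]; linarith
      set zt := t • z + (1 - t) • z₀ with hzt
      have hdzt : dist zt z₀ < δ := by
        have he : zt - z₀ = t • (z - z₀) := by
          rw [hzt]; ext i; simp [Pi.smul_apply, smul_eq_mul]; ring
        rw [dist_eq_norm, he, norm_smul, Real.norm_eq_abs, abs_of_pos htpos,
          ← dist_eq_norm, ← hr, ht]
        rw [div_mul_cancel₀ _ hrpos.ne']
        rw [hδ'] at *; linarith
      have hzt_lb : ((a₀ - 1 : ℝ) : EReal) < h zt := hball hdzt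
      rcases eq_or_ne (h z) ⊤ with hz | hz
      · rw [hz]; exact le_top
      set b := (h z).toReal with hb
      have hzb : h z = (b : EReal) := (EReal.coe_toReal hz (hbot z)).symm
      have hc := hconv z z₀ t htpos.le ht1
      rw [← hzt, hzb, hz₀c] at hc
      have hc' : h zt ≤ ((t * b + (1 - t) * a₀ : ℝ) : EReal) := by
        rw [EReal.coe_add, EReal.coe_mul, EReal.coe_mul]; exact hc
      have hreal : a₀ - 1 < t * b + (1 - t) * a₀ := by
        have := lt_of_lt_of_le hzt_lb hc'
        exact EReal.coe_lt_coe_iff.1 this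
      rw [hzb, EReal.coe_le_coe_iff]
      have hkey : t * (a₀ - b) < 1 := by nlinarith
      have hkey2 : δ' * (a₀ - b) < r := by
        have h2 := mul_lt_mul_of_pos_left hkey hrpos
        rw [ht] at h2
        have h3 : r * (δ' / r * (a₀ - b)) = δ' * (a₀ - b) := by
          field_simp
        rw [h3] at h2; linarith
      have h4 : a₀ - 1 - b ≤ r / δ' := by
        rw [le_div_iff₀ hδ'pos]; nlinarith
      linarith
  obtain ⟨lam, hlam, hquad⟩ := posdef_quad_lb hW
  have hqlb : ∀ z, lam / 2 * (dist x z) ^ 2 ≤ q z := by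
    intro z
    have h1 : (dist x z) ^ 2 ≤ (x - z) ⬝ᵥ (x - z) := by
      rw [dist_eq_norm]; exact sup_norm_sq_le _
    have h2 := hquad (x - z)
    have h3 := mul_le_mul_of_nonneg_left h1 hlam.le
    rw [hq]; dsimp only; nlinarith
  have hqz₀ : 0 ≤ q z₀ := by
    rw [hq]; dsimp only
    have := quad_nonneg hW.posSemidef (x - z₀)
    linarith
  have hCnn : 0 ≤ dist x z₀ := dist_nonneg
  set C := dist x z₀ with hC
  set A := 1 + q z₀ with hA
  have hApos : 0 < A := by rw [hA]; linarith
  set R := C + (2 / (lam * δ') + Real.sqrt (2 * (C + δ' * A) / (lam * δ'))) with hR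
  have hRC : C ≤ R := by
    rw [hR]
    have h1 : 0 < 2 / (lam * δ') := by positivity
    have h2 := Real.sqrt_nonneg (2 * (C + δ' * A) / (lam * δ'))
    linarith
  have hRnn : 0 ≤ R := le_trans hCnn hRC
  have houtside : ∀ z, R < dist z z₀ → f z₀ ≤ f z := by
    intro z hz
    set r := dist z z₀ with hr
    have hrC : C ≤ r := le_trans hRC hz.le
    set s := r - C with hs
    have hsnn : 0 ≤ s := by rw [hs]; linarith
    have hdxz : s ≤ dist x z := by
      have htri : dist z z₀ ≤ dist x z + dist x z₀ := by
        have h' := dist_triangle z x z₀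
        rwa [dist_comm z x] at h'
      rw [hs, hr, hC]
      linarith
    have hmain : s + C + δ' * A ≤ δ' * lam / 2 * s ^ 2 := by
      apply coercive_aux hlam hδ'pos hCnn hApos
      rw [hs]; rw [hR] at hz; linarith
    have hq1 : lam / 2 * s ^ 2 ≤ q z := by
      have h1 : s ^ 2 ≤ (dist x z) ^ 2 := pow_le_pow_left₀ hsnn hdxz 2
      have h4 := mul_le_mul_of_nonneg_left h1 (by positivity : (0:ℝ) ≤ lam / 2)
      have h5 := hqlb z
      linarith
    have hkey : a₀ + q z₀ ≤ a₀ - 1 - r / δ' + q z := by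
      have h6 : r / δ' + A ≤ lam / 2 * s ^ 2 := by
        rw [div_add' _ _ _ hδ'pos.ne', div_le_iff₀ hδ'pos]
        have hrs : r = s + C := by rw [hs]; ring
        rw [hrs]; linarith only [hmain]
      rw [hA] at h6
      linarith
    have e1 : ((a₀ - 1 - r / δ' : ℝ) : EReal) + (q z : EReal) ≤ f z := by
      rw [hf]; dsimp only
      exact add_le_add_left (hlb z) _
    have e2 : f z₀ ≤ ((a₀ - 1 - r / δ' : ℝ) : EReal) + (q z : EReal) := by
      rw [hf]; dsimp only
      rw [hz₀c, ← EReal.coe_add, ← EReal.coe_add, EReal.coe_le_coe_iff]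
      exact hkey
    exact le_trans e2 e1
  obtain ⟨p, hpK, hpmin⟩ := lsc_exists_min (isCompact_closedBall z₀ R)
    ⟨z₀, Metric.mem_closedBall_self hRnn⟩ hflsc
  have hglobal : ∀ z', f p ≤ f z' := by
    intro z'
    by_cases hz' : z' ∈ Metric.closedBall z₀ R
    · exact hpmin z' hz'
    · refine le_trans (hpmin z₀ (Metric.mem_closedBall_self hRnn)) ?_
      apply houtside
      simpa [Metric.mem_closedBall] using hz'
  refine ⟨p, fun z => ?_⟩
  have h2 := hglobal z
  simp only [hf, hq] at h2
  exact h2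

end Stmt4Aux

open Stmt4Aux in
/-- For `V = P + Q₁ - Q₂` SPD with `Qᵢ = Uᵢ Uᵢᵀ` and `P₁ = P + Q₁`:
`P₁` is SPD, the map `M(α) = U₂ᵀ(x - prox^{P₁}_h(x + P₁⁻¹ U₂ α)) + α` has a unique zero
`α₂*`, `prox^V_h(x) = prox^{P₁}_h(x + P₁⁻¹ U₂ α₂*)`, and the latter equals
`prox^P_h(x + P₁⁻¹ U₂ α₂* - P⁻¹ U₁ α₁*)` where `α₁*` is the unique zero of the inner map. -/
theorem stmt_4 {N r₁ r₂ : ℕ}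
    (h : (Fin N → ℝ) → EReal) (hh : Gamma0 h)
    (P : Matrix (Fin N) (Fin N) ℝ) (hP : P.PosDef)
    (U₁ : Matrix (Fin N) (Fin r₁) ℝ)
    (hU₁ : LinearIndependent ℝ (fun j : Fin r₁ => fun i : Fin N => U₁ i j))
    (U₂ : Matrix (Fin N) (Fin r₂) ℝ)
    (hU₂ : LinearIndependent ℝ (fun j : Fin r₂ => fun i : Fin N => U₂ i j))
    (V : Matrix (Fin N) (Fin N) ℝ) (hVdef : V = P + U₁ * U₁ᵀ - U₂ * U₂ᵀ)
    (hVpd : V.PosDef)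
    (P₁ : Matrix (Fin N) (Fin N) ℝ) (hP₁ : P₁ = P + U₁ * U₁ᵀ)
    (proxP proxP1 : (Fin N → ℝ) → (Fin N → ℝ))
    (hproxP : ∀ w : Fin N → ℝ, IsProxPt P h w (proxP w))
    (hproxP1 : ∀ w : Fin N → ℝ, IsProxPt P₁ h w (proxP1 w))
    (x : Fin N → ℝ)
    (M : (Fin r₂ → ℝ) → (Fin r₂ → ℝ))
    (hM : ∀ α : Fin r₂ → ℝ, M α = U₂ᵀ *ᵥ (x - proxP1 (x + P₁⁻¹ *ᵥ (U₂ *ᵥ α))) + α) :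
    P₁.PosDef ∧
    (∃! α₂ : Fin r₂ → ℝ, M α₂ = 0) ∧
    ∀ α₂ : Fin r₂ → ℝ, M α₂ = 0 →
      IsProxPt V h x (proxP1 (x + P₁⁻¹ *ᵥ (U₂ *ᵥ α₂))) ∧
      (∃! α₁ : Fin r₁ → ℝ,
        U₁ᵀ *ᵥ ((x + P₁⁻¹ *ᵥ (U₂ *ᵥ α₂)) -
            proxP ((x + P₁⁻¹ *ᵥ (U₂ *ᵥ α₂)) - P⁻¹ *ᵥ (U₁ *ᵥ α₁))) + α₁ = 0) ∧
      ∀ α₁ : Fin r₁ → ℝ,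
        U₁ᵀ *ᵥ ((x + P₁⁻¹ *ᵥ (U₂ *ᵥ α₂)) -
            proxP ((x + P₁⁻¹ *ᵥ (U₂ *ᵥ α₂)) - P⁻¹ *ᵥ (U₁ *ᵥ α₁))) + α₁ = 0 →
          proxP1 (x + P₁⁻¹ *ᵥ (U₂ *ᵥ α₂)) =
            proxP ((x + P₁⁻¹ *ᵥ (U₂ *ᵥ α₂)) - P⁻¹ *ᵥ (U₁ *ᵥ α₁)) := by
  -- basic positive definiteness and symmetry facts
  have hQ₁psd : (U₁ * U₁ᵀ).PosSemidef := by
    have := posSemidef_self_mul_conjTranspose U₁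
    rwa [conjTranspose_eq_transpose_of_trivial] at this
  have hP₁pd : P₁.PosDef := by rw [hP₁]; exact hP.add_posSemidef hQ₁psd
  have hPsymm : Pᵀ = P := by
    have := hP.isHermitian
    rwa [IsHermitian, conjTranspose_eq_transpose_of_trivial] at this
  have hP₁symm : P₁ᵀ = P₁ := by
    have := hP₁pd.isHermitian
    rwa [IsHermitian, conjTranspose_eq_transpose_of_trivial] at this
  have hVsymm : Vᵀ = V := by
    have := hVpd.isHermitian
    rwa [IsHermitian, conjTranspose_eq_transpose_of_trivial] at this
  have hbot : ∀ z, h z ≠ ⊥ := hh.2.1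
  -- matrix inverse cancellations
  have hP₁inv : ∀ v : Fin N → ℝ, P₁ *ᵥ (P₁⁻¹ *ᵥ v) = v := by
    intro v
    rw [mulVec_mulVec, Matrix.mul_nonsing_inv _ ((Matrix.isUnit_iff_isUnit_det _).1 hP₁pd.isUnit),
      one_mulVec]
  have hPinv : ∀ v : Fin N → ℝ, P *ᵥ (P⁻¹ *ᵥ v) = v := by
    intro v
    rw [mulVec_mulVec, Matrix.mul_nonsing_inv _ ((Matrix.isUnit_iff_isUnit_det _).1 hP.isUnit),
      one_mulVec]
  -- mulVec identities
  have hVsub : ∀ v : Fin N → ℝ, V *ᵥ v = P₁ *ᵥ v - U₂ *ᵥ (U₂ᵀ *ᵥ v) := by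
    intro v
    rw [hVdef, ← hP₁, sub_mulVec, mulVec_mulVec]
  have hP₁add : ∀ v : Fin N → ℝ, P₁ *ᵥ v = P *ᵥ v + U₁ *ᵥ (U₁ᵀ *ᵥ v) := by
    intro v
    rw [hP₁, add_mulVec, mulVec_mulVec]
  -- any zero of M gives the V-prox point
  have key2 : ∀ α₂ : Fin r₂ → ℝ, M α₂ = 0 →
      IsProxPt V h x (proxP1 (x + P₁⁻¹ *ᵥ (U₂ *ᵥ α₂))) := by
    intro α₂ hα₂
    set w := x + P₁⁻¹ *ᵥ (U₂ *ᵥ α₂) with hw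
    set p := proxP1 w with hp
    have hα₂' : U₂ᵀ *ᵥ (x - p) + α₂ = 0 := by rw [hM] at hα₂; exact hα₂
    have hα₂eq : α₂ = -(U₂ᵀ *ᵥ (x - p)) := (neg_eq_of_add_eq_zero_right hα₂').symm
    have hg : P₁ *ᵥ (w - p) = V *ᵥ (x - p) := by
      have hwp : w - p = (x - p) + P₁⁻¹ *ᵥ (U₂ *ᵥ α₂) := by rw [hw]; abel
      rw [hwp, mulVec_add, hP₁inv, hα₂eq, mulVec_neg, hVsub]
      abel
    have hsub := subgrad_of_prox hP₁symm hh (hproxP1 w) hP₁pd.posSemidef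
    rw [hg] at hsub
    exact prox_of_subgrad hVsymm hVpd.posSemidef hbot hsub
  -- existence of a zero of M
  obtain ⟨q, hq⟩ := exists_prox hVpd hh x
  set α₂star : Fin r₂ → ℝ := -(U₂ᵀ *ᵥ (x - q)) with hα₂star
  set wstar := x + P₁⁻¹ *ᵥ (U₂ *ᵥ α₂star) with hwstar
  have hgstar : P₁ *ᵥ (wstar - q) = V *ᵥ (x - q) := by
    have hwp : wstar - q = (x - q) + P₁⁻¹ *ᵥ (U₂ *ᵥ α₂star) := by rw [hwstar]; abel
    rw [hwp, mulVec_add, hP₁inv, hα₂star, mulVec_neg, hVsub]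
    abel
  have hqprox1 : IsProxPt P₁ h wstar q := by
    have hsub := subgrad_of_prox hVsymm hh hq hVpd.posSemidef
    rw [← hgstar] at hsub
    exact prox_of_subgrad hP₁symm hP₁pd.posSemidef hbot hsub
  have hqeq : proxP1 wstar = q :=
    prox_unique hP₁symm hP₁pd hh (hproxP1 wstar) hqprox1
  have hMstar : M α₂star = 0 := by
    rw [hM, ← hwstar, hqeq, hα₂star]
    abel
  -- uniqueness of the zero of M
  have huniq : ∀ α : Fin r₂ → ℝ, M α = 0 → α = α₂star := by
    intro α hα
    have hprox := key2 α hα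
    have hproxstar : IsProxPt V h x q := hq
    have hpeq : proxP1 (x + P₁⁻¹ *ᵥ (U₂ *ᵥ α)) = q :=
      prox_unique hVsymm hVpd hh hprox hproxstar
    have hα' : U₂ᵀ *ᵥ (x - proxP1 (x + P₁⁻¹ *ᵥ (U₂ *ᵥ α))) + α = 0 := by
      rw [hM] at hα; exact hα
    rw [hpeq] at hα'
    rw [hα₂star, ← (neg_eq_of_add_eq_zero_right hα')]
  refine ⟨hP₁pd, ⟨α₂star, hMstar, huniq⟩, ?_⟩
  -- the inner statement
  intro α₂ hα₂
  refine ⟨key2 α₂ hα₂, ?_, ?_⟩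
  · -- existence and uniqueness of the zero of the inner map
    set w := x + P₁⁻¹ *ᵥ (U₂ *ᵥ α₂) with hw
    set p := proxP1 w with hp
    set α₁star : Fin r₁ → ℝ := -(U₁ᵀ *ᵥ (w - p)) with hα₁star
    have hsub := subgrad_of_prox hP₁symm hh (hproxP1 w) hP₁pd.posSemidef
    -- α₁star is a zero
    have hgstar1 : P *ᵥ (w - P⁻¹ *ᵥ (U₁ *ᵥ α₁star) - p) = P₁ *ᵥ (w - p) := by
      have hwp : w - P⁻¹ *ᵥ (U₁ *ᵥ α₁star) - p = (w - p) - P⁻¹ *ᵥ (U₁ *ᵥ α₁star) := by abel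
      rw [hwp, mulVec_sub, hPinv, hα₁star, mulVec_neg, sub_neg_eq_add, hP₁add]
    have hpprox : IsProxPt P h (w - P⁻¹ *ᵥ (U₁ *ᵥ α₁star)) p := by
      have hsub' := hsub
      rw [← hgstar1] at hsub'
      exact prox_of_subgrad hPsymm hP.posSemidef hbot hsub'
    have hpeq : proxP (w - P⁻¹ *ᵥ (U₁ *ᵥ α₁star)) = p :=
      prox_unique hPsymm hP hh (hproxP _) hpprox
    have hzero : U₁ᵀ *ᵥ (w - proxP (w - P⁻¹ *ᵥ (U₁ *ᵥ α₁star))) + α₁star = 0 := by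
      rw [hpeq, hα₁star]; abel
    refine ⟨α₁star, hzero, ?_⟩
    -- uniqueness
    intro α₁ hα₁
    set p' := proxP (w - P⁻¹ *ᵥ (U₁ *ᵥ α₁)) with hp'
    have hα₁' : α₁ = -(U₁ᵀ *ᵥ (w - p')) := (neg_eq_of_add_eq_zero_right hα₁).symm
    have hg' : P *ᵥ (w - P⁻¹ *ᵥ (U₁ *ᵥ α₁) - p') = P₁ *ᵥ (w - p') := by
      have hwp : w - P⁻¹ *ᵥ (U₁ *ᵥ α₁) - p' = (w - p') - P⁻¹ *ᵥ (U₁ *ᵥ α₁) := by abel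
      rw [hwp, mulVec_sub, hPinv, hα₁', mulVec_neg, sub_neg_eq_add, hP₁add]
    have hp'prox1 : IsProxPt P₁ h w p' := by
      have hsub' := subgrad_of_prox hPsymm hh (hproxP (w - P⁻¹ *ᵥ (U₁ *ᵥ α₁))) hP.posSemidef
      rw [hg'] at hsub'
      exact prox_of_subgrad hP₁symm hP₁pd.posSemidef hbot hsub'
    have hp'eq : p' = p := prox_unique hP₁symm hP₁pd hh hp'prox1 (hproxP1 w)
    rw [hα₁', hα₁star, hp'eq]
  · -- the final equality
    intro α₁ hα₁
    set w := x + P₁⁻¹ *ᵥ (U₂ *ᵥ α₂) with hw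
    set p := proxP1 w with hp
    set p' := proxP (w - P⁻¹ *ᵥ (U₁ *ᵥ α₁)) with hp'
    have hα₁' : α₁ = -(U₁ᵀ *ᵥ (w - p')) := (neg_eq_of_add_eq_zero_right hα₁).symm
    have hg' : P *ᵥ (w - P⁻¹ *ᵥ (U₁ *ᵥ α₁) - p') = P₁ *ᵥ (w - p') := by
      have hwp : w - P⁻¹ *ᵥ (U₁ *ᵥ α₁) - p' = (w - p') - P⁻¹ *ᵥ (U₁ *ᵥ α₁) := by abel
      rw [hwp, mulVec_sub, hPinv, hα₁', mulVec_neg, sub_neg_eq_add, hP₁add]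
    have hp'prox1 : IsProxPt P₁ h w p' := by
      have hsub' := subgrad_of_prox hPsymm hh (hproxP (w - P⁻¹ *ᵥ (U₁ *ᵥ α₁))) hP.posSemidef
      rw [hg'] at hsub'
      exact prox_of_subgrad hP₁symm hP₁pd.posSemidef hbot hsub'
    exact (prox_unique hP₁symm hP₁pd hh hp'prox1 (hproxP1 w)).symm
end
end

section
/- Let h ∈ Γ₀(ℝ^N), let D be a diagonal N×N matrix with strictly positive diagonal entries d₁,…,d_N, let u ∈ ℝ^N with u ≠ 0, and assume V = D + u u^T (respectively V = D − u u^T) is symmetric positive definite. Then for every x ∈ ℝ^N, prox^V_h(x) = D^{-1/2}( prox_{h∘D^{-1/2}}( D^{1/2}( x − α* D^{-1} u ) ) ) (respectively with x + α* D^{-1} u), where α* is the unique real root of the function L(α) = ⟨u, x − D^{-1/2}( prox_{h∘D^{-1/2}}( D^{1/2}( x ∓ α D^{-1} u ) ) )⟩ + α (sign − for V = D + u u^T, sign + for V = D − u u^T), and L is strongly increasing and Lipschitz continuous on ℝ with Lipschitz constant 1 + Σ_{i=1}^N u_i²/d_i. -/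
open Matrix

noncomputable section

namespace Stmt5Aux
variable {N : ℕ}

lemma dot_self_nonneg (a : Fin N → ℝ) : 0 ≤ a ⬝ᵥ a :=
  Finset.sum_nonneg fun i _ => mul_self_nonneg _

lemma quad_id (t : ℝ) (a b : Fin N → ℝ) :
    ((1-t)•a + t•b) ⬝ᵥ ((1-t)•a + t•b)
      = (1-t)*(a⬝ᵥa) + t*(b⬝ᵥb) - t*(1-t)*((a-b)⬝ᵥ(a-b)) := by
  simp only [dotProduct, Pi.add_apply, Pi.smul_apply, Pi.sub_apply, smul_eq_mul,
    Finset.mul_sum, ← Finset.sum_add_distrib, ← Finset.sum_sub_distrib]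
  exact Finset.sum_congr rfl fun i _ => by ring

lemma dot_expand (wa wb pa pb : Fin N → ℝ) :
    (wa-wb) ⬝ᵥ (pa-pb) = 1/2*((wa-pb)⬝ᵥ(wa-pb)) - 1/2*((wa-pa)⬝ᵥ(wa-pa))
      + 1/2*((wb-pa)⬝ᵥ(wb-pa)) - 1/2*((wb-pb)⬝ᵥ(wb-pb)) := by
  simp only [dotProduct, Pi.sub_apply, Finset.mul_sum,
    ← Finset.sum_add_distrib, ← Finset.sum_sub_distrib]
  exact Finset.sum_congr rfl fun i _ => by ring

lemma dot_sub_comm (a b : Fin N → ℝ) : (a-b) ⬝ᵥ (a-b) = (b-a) ⬝ᵥ (b-a) := by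
  simp only [dotProduct, Pi.sub_apply]
  exact Finset.sum_congr rfl fun i _ => by ring

lemma vmv (u v y : Fin N → ℝ) : vecMulVec u v *ᵥ y = (v ⬝ᵥ y) • u := by
  funext i
  simp only [mulVec, vecMulVec_apply, dotProduct, Pi.smul_apply, smul_eq_mul, Finset.mul_sum,
    Finset.sum_mul]
  exact Finset.sum_congr rfl fun j _ => by ring

lemma strong_prox (g : (Fin N → ℝ) → EReal)
    (hbot : ∀ z, g z ≠ ⊥)
    (hconv : ∀ a b : Fin N → ℝ, ∀ t : ℝ, 0 ≤ t → t ≤ 1 →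
      g (t • a + (1 - t) • b) ≤ (t : EReal) * g a + ((1 - t : ℝ) : EReal) * g b)
    (w p : Fin N → ℝ) (hptop : g p ≠ ⊤)
    (hprox : ∀ z, g p + ((1/2 * ((w - p) ⬝ᵥ (w - p)) : ℝ) : EReal)
        ≤ g z + ((1/2 * ((w - z) ⬝ᵥ (w - z)) : ℝ) : EReal))
    (z : Fin N → ℝ) :
    g p + ((1/2 * ((w - p) ⬝ᵥ (w - p)) + 1/2 * ((z - p) ⬝ᵥ (z - p)) : ℝ) : EReal)
        ≤ g z + ((1/2 * ((w - z) ⬝ᵥ (w - z)) : ℝ) : EReal) := by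
  by_cases hz : g z = ⊤
  · rw [hz, EReal.top_add_coe]; exact le_top
  obtain ⟨gz, hgz⟩ : ∃ r : ℝ, g z = (r : EReal) := ⟨_, (EReal.coe_toReal hz (hbot z)).symm⟩
  obtain ⟨gp, hgp⟩ : ∃ r : ℝ, g p = (r : EReal) := ⟨_, (EReal.coe_toReal hptop (hbot p)).symm⟩
  have key : ∀ t : ℝ, 0 < t → t ≤ 1 →
      gp + 1/2 * ((w-p)⬝ᵥ(w-p)) + (1-t)/2 * ((z-p)⬝ᵥ(z-p)) ≤ gz + 1/2 * ((w-z)⬝ᵥ(w-z)) := by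
    intro t ht0 ht1
    have hzt := hprox (t • z + (1 - t) • p)
    have hcv := hconv z p t ht0.le ht1
    have hwzt : w - (t • z + (1 - t) • p) = (1-t) • (w - p) + t • (w - z) := by
      funext i
      simp only [Pi.sub_apply, Pi.add_apply, Pi.smul_apply, smul_eq_mul]
      ring
    have hq : (w - p) - (w - z) = z - p := by
      funext i; simp only [Pi.sub_apply]; ring
    rw [hwzt, quad_id, hq] at hzt
    have hchain : g p + ((1/2 * ((w - p) ⬝ᵥ (w - p)) : ℝ) : EReal)
        ≤ ((t * gz + (1-t) * gp : ℝ) : EReal)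
          + ((1/2 * ((1-t)*((w-p)⬝ᵥ(w-p)) + t*((w-z)⬝ᵥ(w-z)) - t*(1-t)*((z-p)⬝ᵥ(z-p))) : ℝ) : EReal) := by
      refine le_trans hzt (add_le_add_left ?_ _)
      rw [hgz, hgp] at hcv
      calc g (t • z + (1-t) • p) ≤ (t:EReal) * (gz:EReal) + ((1-t:ℝ):EReal) * (gp:EReal) := hcv
        _ = ((t * gz + (1-t) * gp : ℝ) : EReal) := by
            rw [← EReal.coe_mul, ← EReal.coe_mul, ← EReal.coe_add]
    rw [hgp, ← EReal.coe_add, ← EReal.coe_add, EReal.coe_le_coe_iff] at hchain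
    have h2 : t * (gp + 1/2*((w-p)⬝ᵥ(w-p)) + (1-t)/2*((z-p)⬝ᵥ(z-p)))
        ≤ t * (gz + 1/2*((w-z)⬝ᵥ(w-z))) := by nlinarith [hchain]
    exact le_of_mul_le_mul_left h2 ht0
  rw [hgz, hgp, ← EReal.coe_add, ← EReal.coe_add, EReal.coe_le_coe_iff]
  have hC := dot_self_nonneg (z - p)
  refine le_of_forall_pos_le_add fun δ hδ => ?_
  rcases eq_or_lt_of_le hC with hC0 | hC0
  · linarith [key 1 one_pos le_rfl]
  · have ht : 0 < min 1 (δ/((z-p)⬝ᵥ(z-p))) := lt_min one_pos (div_pos hδ hC0)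
    have hk := key (min 1 (δ/((z-p)⬝ᵥ(z-p)))) ht (min_le_left _ _)
    have hle : (min 1 (δ/((z-p)⬝ᵥ(z-p)))) * ((z-p)⬝ᵥ(z-p)) ≤ δ := by
      calc (min 1 (δ/((z-p)⬝ᵥ(z-p)))) * ((z-p)⬝ᵥ(z-p))
          ≤ (δ/((z-p)⬝ᵥ(z-p))) * ((z-p)⬝ᵥ(z-p)) :=
            mul_le_mul_of_nonneg_right (min_le_right _ _) hC0.le
        _ = δ := div_mul_cancel₀ δ hC0.ne'
    nlinarith [hk, hle, ht]

end Stmt5Aux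

namespace Stmt5Aux

set_option maxHeartbeats 1600000 in
theorem flat_core {N : ℕ}
    (h : (Fin N → ℝ) → EReal)
    (hbot : ∀ z, h z ≠ ⊥)
    (hconv : ∀ a b : Fin N → ℝ, ∀ t : ℝ, 0 ≤ t → t ≤ 1 →
      h (t • a + (1 - t) • b) ≤ (t : EReal) * h a + ((1 - t : ℝ) : EReal) * h b)
    (z₀ : Fin N → ℝ) (hz₀ : h z₀ ≠ ⊤)
    (s : Fin N → ℝ) (hs : ∀ i, 0 < s i)
    (u : Fin N → ℝ) (hu : u ≠ 0)
    (ε : ℝ) (hε : ε = 1 ∨ ε = -1)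
    (hpd : ε = -1 → (∑ i, (u i / s i)^2) < 1)
    (V : Matrix (Fin N) (Fin N) ℝ)
    (hV : V = Matrix.diagonal (fun i => s i * s i) + ε • vecMulVec u u)
    (x : Fin N → ℝ)
    (W P Q : ℝ → (Fin N → ℝ))
    (hWdef : ∀ α, W α = fun i => s i * x i - ε * α * u i / s i)
    (hQdef : ∀ α, Q α = fun i => (s i)⁻¹ * P α i)
    (hProx : ∀ α (z : Fin N → ℝ),
      h (Q α) + ((1/2 * ((W α - P α) ⬝ᵥ (W α - P α)) : ℝ) : EReal)
        ≤ h (fun i => (s i)⁻¹ * z i) + ((1/2 * ((W α - z) ⬝ᵥ (W α - z)) : ℝ) : EReal))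
    (L : ℝ → ℝ)
    (hL : ∀ α, L α = u ⬝ᵥ (x - Q α) + α) :
    (∃! αs : ℝ, L αs = 0) ∧
    (∀ αs : ℝ, L αs = 0 → IsProxPt V h x (Q αs)) ∧
    (∃ c : ℝ, 0 < c ∧ ∀ a b : ℝ, (L a - L b) * (a - b) ≥ c * (a - b)^2) ∧
    (∀ a b : ℝ, |L a - L b| ≤ (1 + ∑ i, (u i / s i)^2) * |a - b|) := by
  have hsne : ∀ i, s i ≠ 0 := fun i => (hs i).ne'
  have hεabs : |ε| = 1 := by rcases hε with rfl | rfl <;> norm_num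
  have hr2nonneg : (0:ℝ) ≤ ∑ i, (u i / s i)^2 := Finset.sum_nonneg fun i _ => sq_nonneg _
  -- finiteness of h (Q α)
  have hQfin : ∀ α, h (Q α) ≠ ⊤ := by
    intro α hcon
    have h1 := hProx α (fun i => s i * z₀ i)
    have h2 : (fun i => (s i)⁻¹ * (s i * z₀ i)) = z₀ := by
      funext i; rw [inv_mul_cancel_left₀ (hsne i)]
    rw [h2, hcon, EReal.top_add_coe] at h1
    obtain ⟨r0, hr0⟩ : ∃ r : ℝ, h z₀ = (r:EReal) := ⟨_, (EReal.coe_toReal hz₀ (hbot z₀)).symm⟩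
    rw [hr0, ← EReal.coe_add] at h1
    exact absurd h1 (not_le.2 (EReal.coe_lt_top _))
  have hreal : ∀ α, ∃ r : ℝ, h (Q α) = (r : EReal) :=
    fun α => ⟨_, (EReal.coe_toReal (hQfin α) (hbot _)).symm⟩
  -- convexity of z ↦ h (s⁻¹ * z)
  have hgconv : ∀ a b : Fin N → ℝ, ∀ t : ℝ, 0 ≤ t → t ≤ 1 →
      h (fun i => (s i)⁻¹ * (t • a + (1 - t) • b) i)
        ≤ (t:EReal) * h (fun i => (s i)⁻¹ * a i) + ((1-t:ℝ):EReal) * h (fun i => (s i)⁻¹ * b i) := by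
    intro a b t ht0 ht1
    have he : (fun i => (s i)⁻¹ * (t • a + (1 - t) • b) i)
        = t • (fun i => (s i)⁻¹ * a i) + (1 - t) • (fun i => (s i)⁻¹ * b i) := by
      funext i
      simp only [Pi.add_apply, Pi.smul_apply, smul_eq_mul]
      ring
    rw [he]; exact hconv _ _ t ht0 ht1
  -- strengthened prox inequality
  have hSP : ∀ α (z : Fin N → ℝ),
      h (Q α) + ((1/2 * ((W α - P α) ⬝ᵥ (W α - P α)) + 1/2 * ((z - P α) ⬝ᵥ (z - P α)) : ℝ) : EReal)
        ≤ h (fun i => (s i)⁻¹ * z i) + ((1/2 * ((W α - z) ⬝ᵥ (W α - z)) : ℝ) : EReal) := by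
    intro α z
    have hfin' : (fun z => h (fun i => (s i)⁻¹ * z i)) (P α) ≠ ⊤ := by
      show h (fun i => (s i)⁻¹ * P α i) ≠ ⊤
      rw [← hQdef]; exact hQfin α
    have hprox' : ∀ z' : Fin N → ℝ,
        (fun z => h (fun i => (s i)⁻¹ * z i)) (P α)
            + ((1/2 * ((W α - P α) ⬝ᵥ (W α - P α)) : ℝ) : EReal)
          ≤ (fun z => h (fun i => (s i)⁻¹ * z i)) z'
            + ((1/2 * ((W α - z') ⬝ᵥ (W α - z')) : ℝ) : EReal) := by
      intro z'
      show h (fun i => (s i)⁻¹ * P α i) + _ ≤ h (fun i => (s i)⁻¹ * z' i) + _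
      rw [← hQdef]
      exact hProx α z'
    have h1 := strong_prox (g := fun z => h (fun i => (s i)⁻¹ * z i)) (fun z => hbot _) hgconv (W α) (P α) hfin' hprox' z
    beta_reduce at h1
    rw [← hQdef] at h1
    exact h1
  -- firm nonexpansiveness
  have hFNE : ∀ a b : ℝ, (P a - P b) ⬝ᵥ (P a - P b) ≤ (W a - W b) ⬝ᵥ (P a - P b) := by
    intro a b
    obtain ⟨ga, hga⟩ := hreal a
    obtain ⟨gb, hgb⟩ := hreal b
    have h1 := hSP a (P b)
    have h2 := hSP b (P a)
    rw [← hQdef] at h1 h2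
    rw [hga, hgb, ← EReal.coe_add, ← EReal.coe_add, EReal.coe_le_coe_iff] at h1 h2
    have hid := dot_expand (W a) (W b) (P a) (P b)
    have hsym : (P a - P b) ⬝ᵥ (P a - P b) = (P b - P a) ⬝ᵥ (P b - P a) := dot_sub_comm _ _
    linarith
  have hWsub : ∀ a b : ℝ, W a - W b = (ε * (b - a)) • (fun i => u i / s i) := by
    intro a b; rw [hWdef, hWdef]; funext i
    simp only [Pi.sub_apply, Pi.smul_apply, smul_eq_mul]
    field_simp [hsne i]
    ring
  have hTQ : ∀ a b : ℝ, (fun i => u i / s i) ⬝ᵥ (P a - P b) = u ⬝ᵥ (Q a - Q b) := by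
    intro a b; rw [hQdef, hQdef]
    simp only [dotProduct, Pi.sub_apply]
    refine Finset.sum_congr rfl fun i _ => ?_
    field_simp
  have key1 : ∀ a b : ℝ, (P a - P b) ⬝ᵥ (P a - P b) ≤ ε * (b - a) * (u ⬝ᵥ (Q a - Q b)) := by
    intro a b
    have hf := hFNE a b
    rw [hWsub, smul_dotProduct, hTQ] at hf
    simpa using hf
  have key2 : ∀ a b : ℝ, (u ⬝ᵥ (Q a - Q b))^2
      ≤ (∑ i, (u i / s i)^2) * ((P a - P b) ⬝ᵥ (P a - P b)) := by
    intro a b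
    rw [← hTQ]
    calc ((fun i => u i / s i) ⬝ᵥ (P a - P b))^2
        = (∑ i, (u i / s i) * (P a i - P b i))^2 := by
          simp [dotProduct]
      _ ≤ (∑ i, (u i / s i)^2) * (∑ i, (P a i - P b i)^2) :=
          Finset.sum_mul_sq_le_sq_mul_sq _ _ _
      _ = (∑ i, (u i / s i)^2) * ((P a - P b) ⬝ᵥ (P a - P b)) := by
          congr 1
          simp only [dotProduct, Pi.sub_apply, pow_two]
  have key3 : ∀ a b : ℝ, |u ⬝ᵥ (Q a - Q b)| ≤ (∑ i, (u i / s i)^2) * |a - b| := by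
    intro a b
    rcases eq_or_ne (u ⬝ᵥ (Q a - Q b)) 0 with h0 | h0
    · rw [h0, abs_zero]; positivity
    have h1 := key1 a b
    have h2 := key2 a b
    have h3 : ε * (b - a) * (u ⬝ᵥ (Q a - Q b)) ≤ |a - b| * |u ⬝ᵥ (Q a - Q b)| := by
      calc ε * (b - a) * (u ⬝ᵥ (Q a - Q b)) ≤ |ε * (b - a) * (u ⬝ᵥ (Q a - Q b))| := le_abs_self _
        _ = |ε| * |b - a| * |u ⬝ᵥ (Q a - Q b)| := by rw [abs_mul, abs_mul]
        _ = |a - b| * |u ⬝ᵥ (Q a - Q b)| := by rw [hεabs, abs_sub_comm]; ring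
    have hTpos : 0 < |u ⬝ᵥ (Q a - Q b)| := abs_pos.2 h0
    have h4 : (u ⬝ᵥ (Q a - Q b))^2 ≤ (∑ i, (u i / s i)^2) * (|a - b| * |u ⬝ᵥ (Q a - Q b)|) := by
      calc (u ⬝ᵥ (Q a - Q b))^2 ≤ (∑ i, (u i / s i)^2) * ((P a - P b) ⬝ᵥ (P a - P b)) := h2
        _ ≤ (∑ i, (u i / s i)^2) * (ε * (b-a) * (u ⬝ᵥ (Q a - Q b))) :=
            mul_le_mul_of_nonneg_left h1 hr2nonneg
        _ ≤ (∑ i, (u i / s i)^2) * (|a - b| * |u ⬝ᵥ (Q a - Q b)|) :=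
            mul_le_mul_of_nonneg_left h3 hr2nonneg
    nlinarith [h4, sq_abs (u ⬝ᵥ (Q a - Q b)), hTpos]
  have key0 : ∀ a b : ℝ, 0 ≤ ε * (b - a) * (u ⬝ᵥ (Q a - Q b)) :=
    fun a b => le_trans (dot_self_nonneg _) (key1 a b)
  have hLsub : ∀ a b : ℝ, L a - L b = -(u ⬝ᵥ (Q a - Q b)) + (a - b) := by
    intro a b
    rw [hL, hL, dotProduct_sub, dotProduct_sub, dotProduct_sub]
    ring
  -- strong monotonicity
  have hc : ∃ c : ℝ, 0 < c ∧ ∀ a b : ℝ, (L a - L b) * (a - b) ≥ c * (a - b)^2 := by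
    rcases hε with rfl | rfl
    · refine ⟨1, one_pos, fun a b => ?_⟩
      have h0 := key0 a b
      rw [hLsub a b]
      nlinarith [h0]
    · have hr2lt := hpd rfl
      refine ⟨1 - ∑ i, (u i / s i)^2, by linarith, fun a b => ?_⟩
      have h3 := key3 a b
      have habs : |(u ⬝ᵥ (Q a - Q b)) * (a - b)| ≤ (∑ i, (u i / s i)^2) * (a-b)^2 := by
        rw [abs_mul]
        calc |u ⬝ᵥ (Q a - Q b)| * |a-b| ≤ ((∑ i, (u i / s i)^2) * |a-b|) * |a-b| :=
              mul_le_mul_of_nonneg_right h3 (abs_nonneg _)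
          _ = (∑ i, (u i / s i)^2) * (a-b)^2 := by
              rw [mul_assoc, ← pow_two, sq_abs]
      rw [hLsub a b]
      nlinarith [habs, le_abs_self ((u ⬝ᵥ (Q a - Q b)) * (a - b))]
  -- Lipschitz
  have hlip : ∀ a b : ℝ, |L a - L b| ≤ (1 + ∑ i, (u i / s i)^2) * |a - b| := by
    intro a b
    rw [hLsub a b]
    have h1 := abs_add_le (-(u ⬝ᵥ (Q a - Q b))) (a - b)
    rw [abs_neg] at h1
    have h3 := key3 a b
    nlinarith [abs_nonneg (a-b)]
  obtain ⟨c, hcpos, hstrong⟩ := hc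
  -- continuity
  have hcont : Continuous L := by
    have hlw : LipschitzWith (Real.toNNReal (1 + ∑ i, (u i / s i)^2)) L := by
      apply LipschitzWith.of_dist_le_mul
      intro a b
      rw [Real.dist_eq, Real.dist_eq, Real.coe_toNNReal _ (by positivity)]
      exact hlip a b
    exact hlw.continuous
  set M : ℝ := (|L 0| + 1) / c with hM
  have hMpos : 0 < M := by
    rw [hM]; positivity
  have hcM : c * M = |L 0| + 1 := by
    rw [hM]; field_simp
  have hup : 1 ≤ L M := by
    have h1 := hstrong M 0
    have h1' : (|L 0| + 1) * M ≤ (L M - L 0) * M := by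
      calc (|L 0| + 1) * M = (c * M) * M := by rw [hcM]
        _ = c * (M - 0)^2 := by ring
        _ ≤ (L M - L 0) * (M - 0) := h1
        _ = (L M - L 0) * M := by ring
    have h2 := le_of_mul_le_mul_right h1' hMpos
    linarith [neg_abs_le (L 0)]
  have hdn : L (-M) ≤ -1 := by
    have h1 := hstrong (-M) 0
    have h1' : (|L 0| + 1) * M ≤ (L 0 - L (-M)) * M := by
      calc (|L 0| + 1) * M = (c * M) * M := by rw [hcM]
        _ = c * ((-M) - 0)^2 := by ring
        _ ≤ (L (-M) - L 0) * ((-M) - 0) := h1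
        _ = (L 0 - L (-M)) * M := by ring
    have h2 := le_of_mul_le_mul_right h1' hMpos
    linarith [le_abs_self (L 0)]
  have hiv := intermediate_value_Icc (by linarith : -M ≤ M) hcont.continuousOn
  have h0mem : (0:ℝ) ∈ Set.Icc (L (-M)) (L M) := ⟨by linarith, by linarith⟩
  obtain ⟨αs₀, _, hαs₀⟩ := hiv h0mem
  have huniq : ∀ a b : ℝ, L a = 0 → L b = 0 → a = b := by
    intro a b ha hb
    have h1 := hstrong a b
    rw [ha, hb] at h1
    have h2 : (a - b)^2 = 0 := by nlinarith [sq_nonneg (a-b)]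
    have h3 := pow_eq_zero_iff (two_ne_zero) |>.1 h2
    linarith [sub_eq_zero.1 h3]
  -- the prox point property
  have hprox_part : ∀ αs : ℝ, L αs = 0 → IsProxPt V h x (Q αs) := by
    intro αs hroot
    have htp : u ⬝ᵥ (x - Q αs) = -αs := by
      have := hL αs; rw [hroot] at this; linarith
    unfold IsProxPt
    intro z
    by_cases hz : h z = ⊤
    · rw [hz, EReal.top_add_coe]; exact le_top
    obtain ⟨rz, hrz⟩ : ∃ r:ℝ, h z = (r:EReal) := ⟨_, (EReal.coe_toReal hz (hbot z)).symm⟩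
    obtain ⟨rp, hrp⟩ := hreal αs
    have hPfun : P αs = fun i => s i * Q αs i := by
      funext i; simp only [hQdef]; rw [mul_inv_cancel_left₀ (hsne i)]
    -- key identities
    have E1 : ∀ y : Fin N → ℝ,
        (W αs - fun i => s i * y i) ⬝ᵥ (W αs - fun i => s i * y i)
          = ((fun i => s i * (x i - y i)) ⬝ᵥ (fun i => s i * (x i - y i)))
            - (2*ε*αs) * (u ⬝ᵥ (x - y)) + (ε*ε*(αs*αs)) * ∑ i, (u i / s i)^2 := by
      intro y
      rw [hWdef]
      simp only [dotProduct, Pi.sub_apply, Finset.mul_sum,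
        ← Finset.sum_sub_distrib, ← Finset.sum_add_distrib]
      refine Finset.sum_congr rfl fun i _ => ?_
      field_simp [hsne i]
      ring
    have E3 : ((fun i => s i * z i) - fun i => s i * Q αs i) ⬝ᵥ
          ((fun i => s i * z i) - fun i => s i * Q αs i)
        = (fun i => s i * (z i - Q αs i)) ⬝ᵥ (fun i => s i * (z i - Q αs i)) := by
      simp only [dotProduct, Pi.sub_apply]
      exact Finset.sum_congr rfl fun i _ => by ring
    have E4 : ∀ y : Fin N → ℝ, y ⬝ᵥ (V *ᵥ y)
        = ((fun i => s i * y i) ⬝ᵥ (fun i => s i * y i)) + ε * (u ⬝ᵥ y)^2 := by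
      intro y
      rw [hV, add_mulVec, dotProduct_add, smul_mulVec, vmv,
        dotProduct_smul, dotProduct_smul]
      have hd1 : y ⬝ᵥ (Matrix.diagonal (fun i => s i * s i) *ᵥ y)
          = (fun i => s i * y i) ⬝ᵥ (fun i => s i * y i) := by
        simp only [dotProduct, mulVec_diagonal]
        exact Finset.sum_congr rfl fun i _ => by ring
      rw [hd1, dotProduct_comm y u]
      simp only [smul_eq_mul]
      ring
    -- bridges: (x - w) i  vs  x i - w i
    have B1 : (fun i => s i * (x - Q αs) i) = (fun i => s i * (x i - Q αs i)) := by
      simp only [Pi.sub_apply]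
    have B2 : (fun i => s i * (x - z) i) = (fun i => s i * (x i - z i)) := by
      simp only [Pi.sub_apply]
    -- strengthened prox at scaled z
    have hsp := hSP αs (fun i => s i * z i)
    have hz2 : (fun i => (s i)⁻¹ * (s i * z i)) = z := by
      funext i; rw [inv_mul_cancel_left₀ (hsne i)]
    rw [hz2, hrz, hrp, ← EReal.coe_add, ← EReal.coe_add, EReal.coe_le_coe_iff] at hsp
    rw [hPfun] at hsp
    rw [E1 (Q αs), E1 z, E3, htp] at hsp
    -- goal to reals
    rw [hrz, hrp, ← EReal.coe_add, ← EReal.coe_add, EReal.coe_le_coe_iff]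
    rw [E4 (x - Q αs), E4 (x - z), B1, B2, htp]
    have hA3 : 0 ≤ (fun i => s i * (z i - Q αs i)) ⬝ᵥ (fun i => s i * (z i - Q αs i)) :=
      dot_self_nonneg _
    have E6 : (u ⬝ᵥ (x - z) + αs)^2
        ≤ (∑ i, (u i / s i)^2) *
          ((fun i => s i * (z i - Q αs i)) ⬝ᵥ (fun i => s i * (z i - Q αs i))) := by
      have hx1 : u ⬝ᵥ (x - z) + αs = ∑ i, (u i / s i) * (s i * (Q αs i - z i)) := by
        have e0 : u ⬝ᵥ (x - z) + αs = u ⬝ᵥ (x - z) - u ⬝ᵥ (x - Q αs) := by rw [htp]; ring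
        rw [e0, dotProduct_sub, dotProduct_sub]
        simp only [dotProduct]
        rw [← Finset.sum_sub_distrib, ← Finset.sum_sub_distrib, ← Finset.sum_sub_distrib]
        refine Finset.sum_congr rfl fun i _ => ?_
        field_simp [hsne i]
        ring
      rw [hx1]
      calc (∑ i, (u i / s i) * (s i * (Q αs i - z i)))^2
          ≤ (∑ i, (u i / s i)^2) * (∑ i, (s i * (Q αs i - z i))^2) :=
            Finset.sum_mul_sq_le_sq_mul_sq _ _ _
        _ = (∑ i, (u i / s i)^2) *
            ((fun i => s i * (z i - Q αs i)) ⬝ᵥ (fun i => s i * (z i - Q αs i))) := by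
            congr 1
            simp only [dotProduct]
            exact Finset.sum_congr rfl fun i _ => by ring
    rcases hε with rfl | rfl
    · nlinarith [hsp, hA3, sq_nonneg (u ⬝ᵥ (x - z) + αs)]
    · have hr2lt := hpd rfl
      nlinarith [hsp, hA3, E6, hr2lt]
  refine ⟨⟨αs₀, hαs₀, fun y hy => huniq y αs₀ hy hαs₀⟩, hprox_part, ⟨c, hcpos, hstrong⟩, hlip⟩

end Stmt5Aux

set_option maxHeartbeats 1600000 in
/-- Proximity operator in the metric `V = D ± u uᵀ` (SPD, `D` diagonal
with positive entries, encoded via `ε = 1` for `D + uuᵀ` and `ε = -1` for `D - uuᵀ`):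
`prox^V_h(x) = D^{-1/2}(prox_{h∘D^{-1/2}}(D^{1/2}(x ∓ α* D⁻¹ u)))` where `α*` is the
unique root of `L(α) = ⟨u, x - D^{-1/2}(prox_{h∘D^{-1/2}}(D^{1/2}(x ∓ α D⁻¹ u)))⟩ + α`,
and `L` is strongly increasing and Lipschitz with constant `1 + ∑ i, u i²/d i`. -/
theorem stmt_5 {N : ℕ} (h : (Fin N → ℝ) → EReal) (hh : Gamma0 h)
    (d : Fin N → ℝ) (hd : ∀ i, 0 < d i)
    (u : Fin N → ℝ) (hu : u ≠ 0)
    (ε : ℝ) (hε : ε = 1 ∨ ε = -1)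
    (V : Matrix (Fin N) (Fin N) ℝ)
    (hV : V = Matrix.diagonal d + ε • vecMulVec u u) (hVpd : V.PosDef)
    (proxg : (Fin N → ℝ) → (Fin N → ℝ))
    (hproxg : ∀ w : Fin N → ℝ,
      IsProxPt 1 (fun z => h ((Matrix.diagonal fun i => (Real.sqrt (d i))⁻¹) *ᵥ z))
        w (proxg w))
    (x : Fin N → ℝ)
    (L : ℝ → ℝ)
    (hL : ∀ α : ℝ, L α =
      u ⬝ᵥ (x - (Matrix.diagonal fun i => (Real.sqrt (d i))⁻¹) *ᵥ
        proxg ((Matrix.diagonal fun i => Real.sqrt (d i)) *ᵥ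
          (x - (ε * α) • ((Matrix.diagonal fun i => (d i)⁻¹) *ᵥ u)))) + α) :
    (∃! αs : ℝ, L αs = 0) ∧
    (∀ αs : ℝ, L αs = 0 →
      IsProxPt V h x ((Matrix.diagonal fun i => (Real.sqrt (d i))⁻¹) *ᵥ
        proxg ((Matrix.diagonal fun i => Real.sqrt (d i)) *ᵥ
          (x - (ε * αs) • ((Matrix.diagonal fun i => (d i)⁻¹) *ᵥ u))))) ∧
    (∃ c : ℝ, 0 < c ∧ ∀ a b : ℝ, (L a - L b) * (a - b) ≥ c * (a - b) ^ 2) ∧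
    (∀ a b : ℝ, |L a - L b| ≤ (1 + ∑ i, u i ^ 2 / d i) * |a - b|) := by
  classical
  obtain ⟨z₀, hz₀⟩ := hh.1
  have hbot := hh.2.1
  have hconv := hh.2.2.2
  have hsd : ∀ i, 0 < Real.sqrt (d i) := fun i => Real.sqrt_pos.2 (hd i)
  have hsne : ∀ i, Real.sqrt (d i) ≠ 0 := fun i => (hsd i).ne'
  have hdne : ∀ i, d i ≠ 0 := fun i => (hd i).ne'
  have hss : ∀ i, Real.sqrt (d i) * Real.sqrt (d i) = d i := fun i => Real.mul_self_sqrt (hd i).le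
  have hsum : (∑ i, u i ^ 2 / d i) = ∑ i, (u i / Real.sqrt (d i))^2 := by
    refine Finset.sum_congr rfl fun i _ => ?_
    rw [div_pow, Real.sq_sqrt (hd i).le]
  -- positive-definiteness consequence
  have hpd : ε = -1 → (∑ i, (u i / Real.sqrt (d i))^2) < 1 := by
    intro hem
    obtain ⟨j, hj⟩ := Function.ne_iff.1 hu
    have hj' : u j ≠ 0 := by simpa using hj
    have hRpos : 0 < ∑ i, u i ^ 2 / d i := by
      refine Finset.sum_pos' (fun i _ => div_nonneg (sq_nonneg _) (hd i).le)
        ⟨j, Finset.mem_univ j, ?_⟩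
      have h2 : 0 < (u j)^2 := by
        have := pow_pos (abs_pos.2 hj') 2
        rwa [sq_abs] at this
      exact div_pos h2 (hd j)
    have hzne : (fun i => (d i)⁻¹ * u i) ≠ 0 := by
      intro hcon
      apply hj'
      have h0 := congrFun hcon j
      simp only [Pi.zero_apply] at h0
      rcases mul_eq_zero.1 h0 with h1 | h1
      · exact absurd h1 (inv_ne_zero (hdne j))
      · exact h1
    have hq := hVpd.dotProduct_mulVec_pos (x := fun i => (d i)⁻¹ * u i) hzne
    simp only [star_trivial] at hq
    have huz : u ⬝ᵥ (fun i => (d i)⁻¹ * u i) = ∑ i, u i ^ 2 / d i := by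
      simp only [dotProduct]
      refine Finset.sum_congr rfl fun i _ => by ring
    have hdz : (fun i => (d i)⁻¹ * u i) ⬝ᵥ (Matrix.diagonal d *ᵥ (fun i => (d i)⁻¹ * u i))
        = ∑ i, u i ^ 2 / d i := by
      simp only [dotProduct, mulVec_diagonal]
      refine Finset.sum_congr rfl fun i _ => ?_
      field_simp [hdne i]
    rw [hV, add_mulVec, dotProduct_add, smul_mulVec, Stmt5Aux.vmv,
      dotProduct_smul, dotProduct_smul, hdz, huz,
      dotProduct_comm (fun i => (d i)⁻¹ * u i) u, huz] at hq
    simp only [smul_eq_mul, hem] at hq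
    rw [← hsum]
    nlinarith [hq, hRpos]
  -- hypotheses for flat_core
  have hV' : V = Matrix.diagonal (fun i => Real.sqrt (d i) * Real.sqrt (d i))
      + ε • vecMulVec u u := by
    have hd' : (Matrix.diagonal fun i => Real.sqrt (d i) * Real.sqrt (d i))
        = Matrix.diagonal d := by
      exact congrArg Matrix.diagonal (funext hss)
    rw [hV, hd']
  have hW' : ∀ α : ℝ, ((Matrix.diagonal fun i => Real.sqrt (d i)) *ᵥ
        (x - (ε * α) • ((Matrix.diagonal fun i => (d i)⁻¹) *ᵥ u)))
      = fun i => Real.sqrt (d i) * x i - ε * α * u i / Real.sqrt (d i) := by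
    intro α
    funext i
    rw [mulVec_diagonal]
    simp only [Pi.sub_apply, Pi.smul_apply, mulVec_diagonal, smul_eq_mul]
    have h1 : (d i)⁻¹ * u i = u i / (Real.sqrt (d i) * Real.sqrt (d i)) := by
      rw [hss i]; ring
    rw [h1]
    field_simp [hsne i]
  have hQ' : ∀ α : ℝ, ((Matrix.diagonal fun i => (Real.sqrt (d i))⁻¹) *ᵥ
        proxg ((Matrix.diagonal fun i => Real.sqrt (d i)) *ᵥ
          (x - (ε * α) • ((Matrix.diagonal fun i => (d i)⁻¹) *ᵥ u))))
      = fun i => (Real.sqrt (d i))⁻¹ *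
          (proxg ((Matrix.diagonal fun i => Real.sqrt (d i)) *ᵥ
            (x - (ε * α) • ((Matrix.diagonal fun i => (d i)⁻¹) *ᵥ u)))) i := by
    intro α
    funext i
    exact mulVec_diagonal _ _ i
  have hP' : ∀ (α : ℝ) (z : Fin N → ℝ),
      h ((Matrix.diagonal fun i => (Real.sqrt (d i))⁻¹) *ᵥ
          proxg ((Matrix.diagonal fun i => Real.sqrt (d i)) *ᵥ
            (x - (ε * α) • ((Matrix.diagonal fun i => (d i)⁻¹) *ᵥ u))))
        + ((1/2 * ((((Matrix.diagonal fun i => Real.sqrt (d i)) *ᵥ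
            (x - (ε * α) • ((Matrix.diagonal fun i => (d i)⁻¹) *ᵥ u)))
            - proxg ((Matrix.diagonal fun i => Real.sqrt (d i)) *ᵥ
            (x - (ε * α) • ((Matrix.diagonal fun i => (d i)⁻¹) *ᵥ u)))) ⬝ᵥ
            (((Matrix.diagonal fun i => Real.sqrt (d i)) *ᵥ
            (x - (ε * α) • ((Matrix.diagonal fun i => (d i)⁻¹) *ᵥ u)))
            - proxg ((Matrix.diagonal fun i => Real.sqrt (d i)) *ᵥ
            (x - (ε * α) • ((Matrix.diagonal fun i => (d i)⁻¹) *ᵥ u))))) : ℝ) : EReal)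
      ≤ h (fun i => (Real.sqrt (d i))⁻¹ * z i)
        + ((1/2 * ((((Matrix.diagonal fun i => Real.sqrt (d i)) *ᵥ
            (x - (ε * α) • ((Matrix.diagonal fun i => (d i)⁻¹) *ᵥ u))) - z) ⬝ᵥ
            (((Matrix.diagonal fun i => Real.sqrt (d i)) *ᵥ
            (x - (ε * α) • ((Matrix.diagonal fun i => (d i)⁻¹) *ᵥ u))) - z)) : ℝ) : EReal) := by
    intro α z
    have h0 := hproxg ((Matrix.diagonal fun i => Real.sqrt (d i)) *ᵥ
      (x - (ε * α) • ((Matrix.diagonal fun i => (d i)⁻¹) *ᵥ u))) z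
    have hz' : ((Matrix.diagonal fun i => (Real.sqrt (d i))⁻¹) *ᵥ z)
        = fun i => (Real.sqrt (d i))⁻¹ * z i := by
      funext i; exact mulVec_diagonal _ _ i
    simp only [] at h0
    rw [Matrix.one_mulVec, Matrix.one_mulVec, hz'] at h0
    exact h0
  have main := Stmt5Aux.flat_core h hbot hconv z₀ hz₀ (fun i => Real.sqrt (d i)) hsd u hu ε hε
    hpd V hV' x
    (fun α => (Matrix.diagonal fun i => Real.sqrt (d i)) *ᵥ
      (x - (ε * α) • ((Matrix.diagonal fun i => (d i)⁻¹) *ᵥ u)))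
    (fun α => proxg ((Matrix.diagonal fun i => Real.sqrt (d i)) *ᵥ
      (x - (ε * α) • ((Matrix.diagonal fun i => (d i)⁻¹) *ᵥ u))))
    (fun α => (Matrix.diagonal fun i => (Real.sqrt (d i))⁻¹) *ᵥ
      proxg ((Matrix.diagonal fun i => Real.sqrt (d i)) *ᵥ
        (x - (ε * α) • ((Matrix.diagonal fun i => (d i)⁻¹) *ᵥ u))))
    hW' hQ' hP' L hL
  exact ⟨main.1, main.2.1, main.2.2.1, by rw [hsum]; exact main.2.2.2⟩
end
end
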